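/- arXiv:2203.07136 — 3 statements merged into one kernel-verified Lean document; each statement's English description precedes it below -/
import Mathlib

section
/- For every fixed β ∈ ℝ^d with β ≠ 0 and every n ≥ 1, almost surely there exists α ∈ ℝ^d such that βᵀ Σ_{α,n} β = βᵀ Σ_n β, i.e. the real-discriminator objective satisfies V_n(α, β) = (βᵀ(Σ_n − Σ_{α,n})β)² = 0; hence almost surely min_{α ∈ ℝ^d} V_n(α, β) = 0. -/
open MeasureTheory ProbabilityTheory Filter Matrix
open scoped Real

noncomputable section

/-- Discrete Fourier transform of `x : ℝ^d` at frequency `ω = 2πk/d`. -/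
def dft (d : ℕ) (x : Fin d → ℝ) (k : Fin d) : ℂ :=
  ∑ u : Fin d, (x u : ℂ) *
    Complex.exp (-(2 * Real.pi * Complex.I * ((k : ℕ) : ℂ) * ((u : ℕ) : ℂ)) / (d : ℂ))

/-- Circular convolution on `ℝ^d` (indices mod `d`). -/
def cconv (d : ℕ) (a z : Fin d → ℝ) : Fin d → ℝ := fun u => ∑ v : Fin d, a v * z (u - v)

/-- Covariance matrix of `a ⋆ Z`, `Z ~ N(0, I_d)` white noise. -/
def covMat (d : ℕ) (a : Fin d → ℝ) : Matrix (Fin d) (Fin d) ℝ :=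
  Matrix.of fun u u' => ∑ v : Fin d, a (u - v) * a (u' - v)

/-- Spectral (operator) norm of a matrix. -/
def specNorm (d : ℕ) (M : Matrix (Fin d) (Fin d) ℝ) : ℝ :=
  ‖Matrix.toEuclideanCLM (𝕜 := ℝ) M‖

/-- Euclidean norm. -/
def l2norm (d : ℕ) (x : Fin d → ℝ) : ℝ := Real.sqrt (∑ u : Fin d, x u ^ 2)

/-- Empirical covariance matrix of the first `n` samples. -/
def empCov (d n : ℕ) (y : ℕ → Fin d → ℝ) : Matrix (Fin d) (Fin d) ℝ :=
  (n : ℝ)⁻¹ • ∑ i ∈ Finset.range n, Matrix.vecMulVec (y i) (y i)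

/-- Empirical mean of `|ŷ(ω)|²` over the first `n` samples. -/
def empPS (d n : ℕ) (y : ℕ → Fin d → ℝ) (k : Fin d) : ℝ :=
  (n : ℝ)⁻¹ * ∑ i ∈ Finset.range n, Complex.normSq (dft d (y i) k)

/-- The consistent-generator set `A_n` (for a fixed sample `(z̄_i, z_i)_{i<n}`). -/
def An (d n : ℕ) (abar : Fin d → ℝ) (zbar z : ℕ → Fin d → ℝ) : Set (Fin d → ℝ) :=
  {a | ∀ k : Fin d, Complex.normSq (dft d a k) =
      empPS d n (fun i => cconv d abar (zbar i)) k / empPS d n z k}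


/-- The combined family of all Gaussian coordinates of the two sample sequences
`z̄` (at `false`) and `z` (at `true`). -/
def coords {Ω : Type*} (d : ℕ) (zbar z : ℕ → Ω → Fin d → ℝ) :
    Bool × ℕ × Fin d → Ω → ℝ :=
  fun p ω => if p.1 then z p.2.1 ω p.2.2 else zbar p.2.1 ω p.2.2

/-- `(z̄_i)` and `(z_i)` are mutually independent i.i.d. `N(0, I_d)` random vectors:
all the real coordinates are independent standard Gaussians. -/
def IsWhiteNoisePair {Ω : Type*} [MeasureSpace Ω] (d : ℕ)
    (zbar z : ℕ → Ω → Fin d → ℝ) : Prop :=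
  (∀ i, Measurable (zbar i)) ∧ (∀ i, Measurable (z i)) ∧
    iIndepFun (coords d zbar z) ℙ ∧
    ∀ p : Bool × ℕ × Fin d, Measure.map (coords d zbar z p) ℙ = gaussianReal 0 1

/-- The real-discriminator objective `V_n(α, β) = (βᵀ (Σ_n − Σ_{α,n}) β)²`, given the
samples `x_i = xs i` and `z_i = zs i`. -/
def Vreal (d n : ℕ) (xs zs : ℕ → Fin d → ℝ) (a b : Fin d → ℝ) : ℝ :=
  (b ⬝ᵥ (empCov d n xs - empCov d n (fun i => cconv d a (zs i))) *ᵥ b) ^ 2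

/-- Quadratic form of the empirical covariance. -/
lemma quad_empCov (d n : ℕ) (ys : ℕ → Fin d → ℝ) (b : Fin d → ℝ) :
    b ⬝ᵥ empCov d n ys *ᵥ b = (n:ℝ)⁻¹ * ∑ i ∈ Finset.range n, (b ⬝ᵥ ys i)^2 := by
  have h : ∀ i, (b ⬝ᵥ ys i)^2 = ∑ u : Fin d, ∑ u' : Fin d, b u * (ys i u * ys i u') * b u' := by
    intro i
    rw [sq, dotProduct, Finset.sum_mul_sum]
    exact Finset.sum_congr rfl fun u _ => Finset.sum_congr rfl fun u' _ => by ring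
  simp only [h]
  simp only [empCov, dotProduct, Matrix.mulVec, dotProduct, Matrix.smul_apply,
    Matrix.sum_apply, Matrix.vecMulVec_apply, smul_eq_mul, Finset.mul_sum, Finset.sum_mul]
  refine ((Finset.sum_congr rfl fun x _ => Finset.sum_comm).trans ?_)
  refine Finset.sum_comm.trans ?_
  refine Finset.sum_congr rfl fun i _ => Finset.sum_congr rfl fun u _ =>
    Finset.sum_congr rfl fun u' _ => by ring

lemma cconv_delta (d : ℕ) [NeZero d] (c : ℝ) (zi : Fin d → ℝ) :
    cconv d (fun v => if v = 0 then c else 0) zi = fun u => c * zi u := by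
  funext u
  simp only [cconv, ite_mul, zero_mul]
  rw [Finset.sum_ite_eq' Finset.univ (0 : Fin d) (fun v => c * zi (u - v))]
  simp

/-- Deterministic key step: if the noise sample is nondegenerate in direction `b`,
any nonnegative target value is attained by some scaled Dirac generator. -/
lemma exists_match (d n : ℕ) (hd : 1 ≤ d) (zs : ℕ → Fin d → ℝ) (b : Fin d → ℝ)
    (T : ℝ) (hT : 0 ≤ T) (hS : 0 < ∑ i ∈ Finset.range n, (b ⬝ᵥ zs i)^2) :
    ∃ a : Fin d → ℝ, b ⬝ᵥ empCov d n (fun i => cconv d a (zs i)) *ᵥ b = T := by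
  haveI : NeZero d := ⟨by omega⟩
  set S := ∑ i ∈ Finset.range n, (b ⬝ᵥ zs i)^2 with hSdef
  have hn0 : (n : ℝ) ≠ 0 := by
    rcases Nat.eq_zero_or_pos n with h | h
    · subst h; simp [hSdef] at hS
    · exact_mod_cast h.ne'
  set c := Real.sqrt (T * n / S) with hc
  refine ⟨fun v => if v = 0 then c else 0, ?_⟩
  have hcc : c ^ 2 = T * n / S := Real.sq_sqrt (by positivity)
  have hz : (fun i => cconv d (fun v => if v = 0 then c else 0) (zs i)) =
      fun i u => c * zs i u := by
    funext i; exact cconv_delta d c (zs i)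
  rw [hz, quad_empCov]
  have : ∀ i, (b ⬝ᵥ fun u => c * zs i u) = c * (b ⬝ᵥ zs i) := by
    intro i
    simp only [dotProduct, Finset.mul_sum]
    exact Finset.sum_congr rfl fun u _ => by ring
  simp only [this, mul_pow, ← Finset.mul_sum, ← hSdef, hcc]
  field_simp

/-- Almost surely the first noise sample is not orthogonal to `b`. -/
lemma ae_dot_ne {Ω : Type*} [MeasureSpace Ω] [IsProbabilityMeasure (ℙ : Measure Ω)]
    {d : ℕ} (zbar z : ℕ → Ω → Fin d → ℝ) (hwn : IsWhiteNoisePair d zbar z)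
    (b : Fin d → ℝ) (hb : b ≠ 0) :
    ∀ᵐ ω ∂ℙ, b ⬝ᵥ z 0 ω ≠ 0 := by
  classical
  obtain ⟨hzb, hz, hind, hmap⟩ := hwn
  obtain ⟨k₀, hk₀⟩ : ∃ k, b k ≠ 0 := Function.ne_iff.mp hb
  set f := coords d zbar z with hf
  have hfm : ∀ p, Measurable (f p) := by
    rintro ⟨c, i, k⟩
    cases c
    · exact (measurable_pi_apply k).comp (hzb i)
    · exact (measurable_pi_apply k).comp (hz i)
  set S : Finset (Bool × ℕ × Fin d) := {((true : Bool), (0 : ℕ), k₀)} with hSdef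
  set T : Finset (Bool × ℕ × Fin d) :=
    (Finset.univ.erase k₀).image (fun k => ((true : Bool), (0 : ℕ), k)) with hTdef
  have hdisj : Disjoint S T := by
    rw [Finset.disjoint_left]
    intro p hpS hpT
    rw [hSdef, Finset.mem_singleton] at hpS
    subst hpS
    rw [hTdef, Finset.mem_image] at hpT
    obtain ⟨k, hk, hkeq⟩ := hpT
    have : k = k₀ := by injection hkeq with _ h2; injection h2
    exact (Finset.ne_of_mem_erase hk) this
  have hIF := hind.indepFun_finset S T hdisj hfm
  have hmemS : ((true : Bool), (0 : ℕ), k₀) ∈ S := by simp [hSdef]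
  set g1 : ({x // x ∈ S} → ℝ) → ℝ := fun v => v ⟨_, hmemS⟩ with hg1
  set g2 : ({x // x ∈ T} → ℝ) → ℝ :=
    fun v => -(∑ p : {x // x ∈ T}, b (p : Bool × ℕ × Fin d).2.2 * v p) / b k₀ with hg2
  have hg1m : Measurable g1 := measurable_pi_apply _
  have hg2m : Measurable g2 := by
    apply Measurable.div_const
    apply Measurable.neg
    exact Finset.measurable_sum _ fun p _ => (measurable_pi_apply p).const_mul _
  set X : Ω → ℝ := fun ω => f ((true : Bool), (0 : ℕ), k₀) ω with hX
  set W : Ω → ℝ :=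
    fun ω => -(∑ p : {x // x ∈ T}, b (p : Bool × ℕ × Fin d).2.2 *
      f (p : Bool × ℕ × Fin d) ω) / b k₀ with hW
  have hXW : IndepFun X W ℙ := hIF.comp hg1m hg2m
  have hXm : Measurable X := hfm _
  have hWm : Measurable W := by
    apply Measurable.div_const
    apply Measurable.neg
    exact Finset.measurable_sum _ fun p _ => ((hfm _)).const_mul _
  have hXlaw : Measure.map X ℙ = gaussianReal 0 1 := hmap _
  -- the event {X = W} has probability zero
  have hset : MeasurableSet {p : ℝ × ℝ | p.2 = p.1} :=
    measurableSet_eq_fun measurable_snd measurable_fst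
  have hprod := (indepFun_iff_map_prod_eq_prod_map_map hWm.aemeasurable
    hXm.aemeasurable).mp hXW.symm
  have hzero : ℙ {ω | X ω = W ω} = 0 := by
    have h1 : {ω | X ω = W ω} = (fun ω => (W ω, X ω)) ⁻¹' {p : ℝ × ℝ | p.2 = p.1} := rfl
    rw [h1, ← Measure.map_apply (hWm.prodMk hXm) hset, hprod,
      Measure.prod_apply hset]
    have h2 : ∀ w : ℝ, (Measure.map X ℙ) (Prod.mk w ⁻¹' {p : ℝ × ℝ | p.2 = p.1}) = 0 := by
      intro w
      have : Prod.mk w ⁻¹' {p : ℝ × ℝ | p.2 = p.1} = {w} := by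
        ext x; simp [eq_comm]
      rw [this, hXlaw]
      exact gaussianReal_absolutelyContinuous 0 one_ne_zero (by simp)
    simp only [h2, lintegral_zero]
  -- relate the events
  have hR : ∀ ω, b ⬝ᵥ z 0 ω = b k₀ * X ω - b k₀ * W ω := by
    intro ω
    have hsum : (∑ p : {x // x ∈ T}, b (p : Bool × ℕ × Fin d).2.2 *
        f (p : Bool × ℕ × Fin d) ω) =
        ∑ k ∈ Finset.univ.erase k₀, b k * z 0 ω k := by
      rw [Finset.sum_coe_sort T (fun p => b p.2.2 * f p ω), hTdef,
        Finset.sum_image (by intro a _ c _ h; injection h with _ h2; injection h2)]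
      rfl
    have hdot : b ⬝ᵥ z 0 ω =
        b k₀ * z 0 ω k₀ + ∑ k ∈ Finset.univ.erase k₀, b k * z 0 ω k := by
      rw [dotProduct, ← Finset.add_sum_erase Finset.univ _ (Finset.mem_univ k₀)]
    rw [hdot, hW]
    beta_reduce
    rw [hsum]
    have hXω : X ω = z 0 ω k₀ := rfl
    rw [hXω]
    field_simp
    ring
  rw [ae_iff]
  have hsub : {ω | ¬b ⬝ᵥ z 0 ω ≠ 0} = {ω | X ω = W ω} := by
    ext ω
    simp only [Set.mem_setOf_eq, not_not, hR ω, sub_eq_zero]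
    constructor
    · intro h; exact mul_left_cancel₀ hk₀ h
    · intro h; rw [h]
  rw [hsub]; exact hzero

theorem stmt6 {d n : ℕ} (hd : 1 ≤ d) (hn : 1 ≤ n)
    {Ω : Type*} [MeasureSpace Ω] [IsProbabilityMeasure (ℙ : Measure Ω)]
    (abar : Fin d → ℝ) (zbar z : ℕ → Ω → Fin d → ℝ) (hwn : IsWhiteNoisePair d zbar z)
    (b : Fin d → ℝ) (hb : b ≠ 0) :
    ∀ᵐ ω ∂ℙ,
      (∃ a : Fin d → ℝ,
          b ⬝ᵥ empCov d n (fun i => cconv d a (z i ω)) *ᵥ b =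
            b ⬝ᵥ empCov d n (fun i => cconv d abar (zbar i ω)) *ᵥ b) ∧
        (∃ a : Fin d → ℝ,
          Vreal d n (fun i => cconv d abar (zbar i ω)) (fun i => z i ω) a b = 0) ∧
        IsLeast {t : ℝ | ∃ a : Fin d → ℝ,
          t = Vreal d n (fun i => cconv d abar (zbar i ω)) (fun i => z i ω) a b} 0 := by
  filter_upwards [ae_dot_ne zbar z hwn b hb] with ω hω
  set Tv : ℝ := b ⬝ᵥ empCov d n (fun i => cconv d abar (zbar i ω)) *ᵥ b with hTv
  have hT0 : 0 ≤ Tv := by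
    rw [hTv, quad_empCov]
    positivity
  have hS : 0 < ∑ i ∈ Finset.range n, (b ⬝ᵥ z i ω)^2 := by
    apply Finset.sum_pos' (fun i _ => sq_nonneg _)
    exact ⟨0, Finset.mem_range.mpr hn, pow_two_pos_of_ne_zero hω⟩
  obtain ⟨a, ha⟩ := exists_match d n hd (fun i => z i ω) b Tv hT0 hS
  have hV : Vreal d n (fun i => cconv d abar (zbar i ω)) (fun i => z i ω) a b = 0 := by
    rw [Vreal, Matrix.sub_mulVec, dotProduct_sub, ha, ← hTv, sub_self]
    simp
  refine ⟨⟨a, ha⟩, ⟨a, hV⟩, ⟨⟨a, hV.symm⟩, ?_⟩⟩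
  rintro t ⟨a', rfl⟩
  exact sq_nonneg _

end
end

section
/- Let m = d and define the discrete Fourier discriminator β̊ by β̊_ℓ(u) = e^{i2πℓu/d} for 0 ≤ u < d and 0 ≤ ℓ < d. Then almost surely, for every α̊ ∈ A_n: r_{n,ℓ}(α̊, β̊) = 0 for all ℓ < d (so V_n(α̊, β̊) = 0), and all partial derivatives of V_n with respect to α and with respect to the real and imaginary parts of the β-variables vanish at (α̊, β̊); that is, (α̊, β̊) is an equilibrium of V_n. -/
open MeasureTheory ProbabilityTheory Filter Matrix
open scoped Real

noncomputable section

/-- Hermitian pairing `⟨b, x⟩ = ∑_u b(u)* x(u)` between `b ∈ ℂ^d` and `x ∈ ℝ^d`. -/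
def cInner (d : ℕ) (b : Fin d → ℂ) (x : Fin d → ℝ) : ℂ :=
  ∑ u : Fin d, (starRingEnd ℂ) (b u) * (x u : ℂ)

/-- `r_{n,ℓ}(α, β) = E_n(|⟨β_ℓ, X⟩|²) − E_n(|⟨β_ℓ, α ⋆ Z⟩|²)` for the complex
discriminator, given samples `x_i = xs i`, `z_i = zs i`. -/
def rCpx (d n : ℕ) (xs zs : ℕ → Fin d → ℝ) (a : Fin d → ℝ) (bl : Fin d → ℂ) : ℝ :=
  (n : ℝ)⁻¹ * ∑ i ∈ Finset.range n, Complex.normSq (cInner d bl (xs i))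
    - (n : ℝ)⁻¹ * ∑ i ∈ Finset.range n, Complex.normSq (cInner d bl (cconv d a (zs i)))

/-- The complex-discriminator objective `V_n(α, β) = ∑_{ℓ<m} r_{n,ℓ}(α, β)²`. -/
def VCpx (d n m : ℕ) (xs zs : ℕ → Fin d → ℝ) (a : Fin d → ℝ)
    (b : Fin m → Fin d → ℂ) : ℝ :=
  ∑ ℓ : Fin m, rCpx d n xs zs a (b ℓ) ^ 2

/-- The discrete Fourier discriminator `β̊_ℓ(u) = e^{i2πℓu/d}`. -/
def fourierDisc (d : ℕ) : Fin d → Fin d → ℂ :=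
  fun ℓ u => Complex.exp (2 * Real.pi * Complex.I * ((ℓ : ℕ) : ℂ) * ((u : ℕ) : ℂ) / (d : ℂ))


lemma exp_pow (d : ℕ) (hd : d ≠ 0) (k : Fin d) (m : ℕ) :
    Complex.exp (-(2 * Real.pi * Complex.I * ((k : ℕ) : ℂ) * (m : ℂ)) / (d : ℂ))
      = Complex.exp (-(2 * Real.pi * Complex.I * ((k : ℕ) : ℂ)) / (d : ℂ)) ^ m := by
  rw [← Complex.exp_nat_mul]
  congr 1
  ring

lemma root_pow_d (d : ℕ) (hd : d ≠ 0) (k : Fin d) :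
    Complex.exp (-(2 * Real.pi * Complex.I * ((k : ℕ) : ℂ)) / (d : ℂ)) ^ d = 1 := by
  rw [← Complex.exp_nat_mul]
  have hd0 : (d : ℂ) ≠ 0 := Nat.cast_ne_zero.mpr hd
  have : (d : ℂ) * (-(2 * Real.pi * Complex.I * ((k : ℕ) : ℂ)) / (d : ℂ))
      = ((-(k : ℕ) : ℤ) : ℂ) * (2 * Real.pi * Complex.I) := by
    field_simp
    push_cast
    ring
  rw [this, Complex.exp_int_mul_two_pi_mul_I]

lemma root_pow_mod (d : ℕ) (hd : d ≠ 0) (k : Fin d) (m : ℕ) :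
    Complex.exp (-(2 * Real.pi * Complex.I * ((k : ℕ) : ℂ)) / (d : ℂ)) ^ (m % d)
      = Complex.exp (-(2 * Real.pi * Complex.I * ((k : ℕ) : ℂ)) / (d : ℂ)) ^ m := by
  conv_rhs => rw [← Nat.div_add_mod m d]
  rw [pow_add, pow_mul, root_pow_d d hd k, one_pow, one_mul]

lemma dft_eq_pow (d : ℕ) (hd : d ≠ 0) (x : Fin d → ℝ) (k : Fin d) :
    dft d x k = ∑ u : Fin d,
      (x u : ℂ) * Complex.exp (-(2 * Real.pi * Complex.I * ((k : ℕ) : ℂ)) / (d : ℂ)) ^ (u : ℕ) := by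
  unfold dft
  exact Finset.sum_congr rfl fun u _ => by rw [exp_pow d hd k]

lemma dft_cconv (d : ℕ) (hd : d ≠ 0) (a zz : Fin d → ℝ) (k : Fin d) :
    dft d (cconv d a zz) k = dft d a k * dft d zz k := by
  haveI : NeZero d := ⟨hd⟩
  set w : ℂ := Complex.exp (-(2 * Real.pi * Complex.I * ((k : ℕ) : ℂ)) / (d : ℂ)) with hw
  rw [dft_eq_pow d hd, dft_eq_pow d hd, dft_eq_pow d hd]
  unfold cconv
  push_cast
  have L : (∑ u : Fin d, (∑ v : Fin d, (a v : ℂ) * (zz (u - v) : ℂ)) * w ^ (u : ℕ))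
      = ∑ v : Fin d, ∑ u : Fin d, (a v : ℂ) * (zz (u - v) : ℂ) * w ^ (u : ℕ) := by
    rw [← Finset.sum_comm]
    exact Finset.sum_congr rfl fun u _ => Finset.sum_mul _ _ _
  rw [L, Finset.sum_mul]
  refine Finset.sum_congr rfl fun v _ => ?_
  rw [Finset.mul_sum]
  refine Fintype.sum_equiv (Equiv.subRight v) _ _ fun u => ?_
  simp only [Equiv.subRight_apply]
  have h2 : v + (u - v) = u := by abel
  have h1 : w ^ ((v : ℕ) + ((u - v : Fin d) : ℕ)) = w ^ (u : ℕ) := by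
    rw [← root_pow_mod d hd k, ← Fin.val_add, h2]
  rw [← h1, pow_add]
  ring

lemma cInner_fourierDisc (d : ℕ) (ℓ : Fin d) (x : Fin d → ℝ) :
    cInner d (fourierDisc d ℓ) x = dft d x ℓ := by
  unfold cInner fourierDisc dft
  refine Finset.sum_congr rfl fun u _ => ?_
  rw [← Complex.exp_conj]
  rw [mul_comm]
  congr 2
  simp only [map_div₀, _root_.map_mul, map_ofNat, Complex.conj_ofReal, Complex.conj_I,
    map_natCast]
  ring

lemma rCpx_fourier (d n : ℕ) (hd : d ≠ 0) (xs zs : ℕ → Fin d → ℝ) (a : Fin d → ℝ) (ℓ : Fin d) :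
    rCpx d n xs zs a (fourierDisc d ℓ)
      = empPS d n xs ℓ - Complex.normSq (dft d a ℓ) * empPS d n zs ℓ := by
  unfold rCpx empPS
  simp only [cInner_fourierDisc]
  have : ∀ i, Complex.normSq (dft d (cconv d a (zs i)) ℓ)
      = Complex.normSq (dft d a ℓ) * Complex.normSq (dft d (zs i) ℓ) := fun i => by
    rw [dft_cconv d hd, Complex.normSq_mul]
  simp only [this]
  rw [← Finset.mul_sum]
  ring

lemma rCpx_fourier_zero (d n : ℕ) (hd : d ≠ 0) (xs zs : ℕ → Fin d → ℝ) (a : Fin d → ℝ)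
    (ℓ : Fin d) (hz : empPS d n zs ℓ ≠ 0)
    (ha : Complex.normSq (dft d a ℓ) = empPS d n xs ℓ / empPS d n zs ℓ) :
    rCpx d n xs zs a (fourierDisc d ℓ) = 0 := by
  rw [rCpx_fourier d n hd, ha, div_mul_cancel₀ _ hz, sub_self]

lemma diff_normSq {g : ℝ → ℂ} (hg : Differentiable ℝ g) :
    Differentiable ℝ (fun t => Complex.normSq (g t)) := by
  have hre : Differentiable ℝ (fun t => (g t).re) := Complex.reCLM.differentiable.comp hg
  have him : Differentiable ℝ (fun t => (g t).im) := Complex.imCLM.differentiable.comp hg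
  simpa [Complex.normSq_apply] using (hre.fun_mul hre).fun_add (him.fun_mul him)

lemma diff_conj {g : ℝ → ℂ} (hg : Differentiable ℝ g) :
    Differentiable ℝ (fun t => (starRingEnd ℂ) (g t)) :=
  Complex.conjCLE.differentiable.comp hg

lemma diffAux {d n : ℕ} (xs zs : ℕ → Fin d → ℝ) (A : ℝ → Fin d → ℝ) (B : ℝ → Fin d → ℂ)
    (hA : ∀ v, Differentiable ℝ fun t => A t v) (hB : ∀ u, Differentiable ℝ fun t => B t u) :
    Differentiable ℝ fun t => rCpx d n xs zs (A t) (B t) := by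
  have hcI : ∀ x : Fin d → ℝ, Differentiable ℝ fun t => cInner d (B t) x := fun x => by
    unfold cInner
    exact Differentiable.fun_sum fun u _ => (diff_conj (hB u)).mul_const _
  have hconv : ∀ i, Differentiable ℝ fun t => cInner d (B t) (cconv d (A t) (zs i)) := fun i => by
    have : (fun t => cInner d (B t) (cconv d (A t) (zs i)))
        = fun t => ∑ u : Fin d, (starRingEnd ℂ) (B t u)
            * ((∑ v : Fin d, A t v * zs i (u - v) : ℝ) : ℂ) := rfl
    rw [this]
    refine Differentiable.fun_sum fun u _ => (diff_conj (hB u)).fun_mul ?_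
    exact Complex.ofRealCLM.differentiable.comp
      (Differentiable.fun_sum (u := Finset.univ) (A := fun v t => A t v * zs i (u - v))
        fun v _ => (hA v).mul_const _)
  unfold rCpx
  refine Differentiable.sub ?_ ?_ <;>
    exact (Differentiable.fun_sum fun i _ => diff_normSq (by first | exact hcI (xs i) | exact hconv i)).const_mul _

lemma hasDerivAt_sum_sq {m : ℕ} (f : Fin m → ℝ → ℝ) (t₀ : ℝ)
    (hdiff : ∀ ℓ, Differentiable ℝ (f ℓ)) (h0 : ∀ ℓ, f ℓ t₀ = 0) :
    HasDerivAt (fun t => ∑ ℓ : Fin m, f ℓ t ^ 2) 0 t₀ := by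
  have h : HasDerivAt (fun t => ∑ ℓ : Fin m, f ℓ t ^ 2)
      (∑ ℓ : Fin m, ((2 : ℕ) * f ℓ t₀ ^ (2 - 1) * deriv (f ℓ) t₀)) t₀ :=
    HasDerivAt.fun_sum fun ℓ _ => ((hdiff ℓ t₀).hasDerivAt).pow 2
  simpa [h0] using h

lemma key {d n : ℕ} (hd : 1 ≤ d) (xs zs : ℕ → Fin d → ℝ) (a₀ : Fin d → ℝ)
    (hz : ∀ k, empPS d n zs k ≠ 0)
    (ha : ∀ k, Complex.normSq (dft d a₀ k) = empPS d n xs k / empPS d n zs k) :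
    (∀ ℓ : Fin d, rCpx d n xs zs a₀ (fourierDisc d ℓ) = 0) ∧
    VCpx d n d xs zs a₀ (fourierDisc d) = 0 ∧
    (∀ u : Fin d, HasDerivAt (fun t : ℝ =>
        VCpx d n d xs zs (Function.update a₀ u t) (fourierDisc d)) 0 (a₀ u)) ∧
    (∀ ℓ v : Fin d, HasDerivAt (fun t : ℝ =>
        VCpx d n d xs zs a₀ (Function.update (fourierDisc d) ℓ
          (Function.update (fourierDisc d ℓ) v (fourierDisc d ℓ v + (t : ℂ))))) 0 0) ∧
    (∀ ℓ v : Fin d, HasDerivAt (fun t : ℝ =>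
        VCpx d n d xs zs a₀ (Function.update (fourierDisc d) ℓ
          (Function.update (fourierDisc d ℓ) v
            (fourierDisc d ℓ v + (t : ℂ) * Complex.I)))) 0 0) := by
  have hd0 : d ≠ 0 := by omega
  have hr : ∀ ℓ : Fin d, rCpx d n xs zs a₀ (fourierDisc d ℓ) = 0 := fun ℓ =>
    rCpx_fourier_zero d n hd0 xs zs a₀ ℓ (hz ℓ) (ha ℓ)
  have hAupd : ∀ (u v : Fin d), Differentiable ℝ fun t : ℝ => Function.update a₀ u t v := by
    intro u v
    by_cases h : v = u
    · subst h; simp only [Function.update_self]; exact differentiable_id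
    · simp only [Function.update_of_ne h]; exact differentiable_const _
  have hBupd : ∀ (e : ℝ → ℂ), Differentiable ℝ e → ∀ (ℓ v ℓ' u : Fin d),
      Differentiable ℝ fun t : ℝ => (Function.update (fourierDisc d) ℓ
        (Function.update (fourierDisc d ℓ) v (fourierDisc d ℓ v + e t))) ℓ' u := by
    intro e he ℓ v ℓ' u
    by_cases h : ℓ' = ℓ
    · subst h
      simp only [Function.update_self]
      by_cases h2 : u = v
      · subst h2; simp only [Function.update_self]
        exact (differentiable_const _).add he
      · simp only [Function.update_of_ne h2]; exact differentiable_const _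
    · simp only [Function.update_of_ne h]; exact differentiable_const _
  refine ⟨hr, ?_, ?_, ?_, ?_⟩
  · unfold VCpx
    simp [hr]
  · intro u
    refine hasDerivAt_sum_sq
      (fun ℓ t => rCpx d n xs zs (Function.update a₀ u t) (fourierDisc d ℓ)) (a₀ u)
      (fun ℓ => diffAux xs zs _ (fun _ => fourierDisc d ℓ) (hAupd u)
        (fun _ => differentiable_const _))
      (fun ℓ => by
        show rCpx d n xs zs (Function.update a₀ u (a₀ u)) (fourierDisc d ℓ) = 0
        rw [Function.update_eq_self]; exact hr ℓ)
  · intro ℓ v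
    refine hasDerivAt_sum_sq
      (fun ℓ' t => rCpx d n xs zs a₀ ((Function.update (fourierDisc d) ℓ
        (Function.update (fourierDisc d ℓ) v (fourierDisc d ℓ v + (t : ℂ)))) ℓ')) 0
      (fun ℓ' => diffAux xs zs (fun _ => a₀) _ (fun _ => differentiable_const _)
        (hBupd (fun t => (t : ℂ)) Complex.ofRealCLM.differentiable ℓ v ℓ'))
      (fun ℓ' => by
        simp only [Complex.ofReal_zero, add_zero, Function.update_eq_self]
        exact hr ℓ')
  · intro ℓ v
    refine hasDerivAt_sum_sq
      (fun ℓ' t => rCpx d n xs zs a₀ ((Function.update (fourierDisc d) ℓ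
        (Function.update (fourierDisc d ℓ) v
          (fourierDisc d ℓ v + (t : ℂ) * Complex.I))) ℓ')) 0
      (fun ℓ' => diffAux xs zs (fun _ => a₀) _ (fun _ => differentiable_const _)
        (hBupd (fun t => (t : ℂ) * Complex.I)
          (Complex.ofRealCLM.differentiable.mul_const _) ℓ v ℓ'))
      (fun ℓ' => by
        simp only [Complex.ofReal_zero, zero_mul, add_zero, Function.update_eq_self]
        exact hr ℓ')

lemma nullLinear {Ω : Type*} [MeasureSpace Ω] [IsProbabilityMeasure (ℙ : Measure Ω)]
    {d : ℕ} (zbar z : ℕ → Ω → Fin d → ℝ) (hwn : IsWhiteNoisePair d zbar z)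
    (c : Fin d → ℝ) (u₀ : Fin d) (hc : c u₀ ≠ 0) (i : ℕ) :
    ℙ {ω | ∑ u : Fin d, c u * z i ω u = 0} = 0 := by
  classical
  obtain ⟨hmz, hmzz, hiid, hlaw⟩ := hwn
  set f := coords d zbar z with hf
  have hmeas : ∀ p, Measurable (f p) := by
    intro p
    rcases p with ⟨b, j, u⟩
    cases b
    · exact (measurable_pi_apply u).comp (hmz j)
    · exact (measurable_pi_apply u).comp (hmzz j)
  set p₀ : Bool × ℕ × Fin d := (true, i, u₀) with hp₀
  set T : Finset (Bool × ℕ × Fin d) :=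
    (Finset.univ.erase u₀).image (fun u => (true, i, u)) with hT
  have hdisj : Disjoint T ({p₀} : Finset (Bool × ℕ × Fin d)) := by
    simp only [Finset.disjoint_singleton_right, hT, Finset.mem_image]
    rintro ⟨u, hu, huv⟩
    rw [hp₀] at huv
    have : u = u₀ := by
      have := congrArg (fun q => q.2.2) huv
      simpa using this
    exact (Finset.mem_erase.mp hu).1 this
  set B : Ω → (T → ℝ) := fun ω j => f j ω with hB
  set A : Ω → (({p₀} : Finset (Bool × ℕ × Fin d)) → ℝ) := fun ω j => f j ω with hA
  have hmB : Measurable B := measurable_pi_iff.mpr fun j => hmeas j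
  have hmA : Measurable A := measurable_pi_iff.mpr fun j => hmeas j
  have indep : IndepFun B A ℙ := hiid.indepFun_finset T {p₀} hdisj hmeas
  have hmap : Measure.map (fun ω => (B ω, A ω)) ℙ
      = (Measure.map B ℙ).prod (Measure.map A ℙ) :=
    (indepFun_iff_map_prod_eq_prod_map_map hmB.aemeasurable hmA.aemeasurable).mp indep
  set i₀ : ({p₀} : Finset (Bool × ℕ × Fin d)) := ⟨p₀, Finset.mem_singleton_self p₀⟩ with hi₀
  set ψ : (T → ℝ) → ℝ := fun b => ∑ j : T, c (j : Bool × ℕ × Fin d).2.2 * b j with hψ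
  have hmψ : Measurable ψ := by
    apply Finset.measurable_sum
    intro j _
    exact measurable_const.mul (measurable_pi_apply j)
  set g : ((T → ℝ) × (({p₀} : Finset (Bool × ℕ × Fin d)) → ℝ)) → ℝ :=
    fun q => c u₀ * q.2 i₀ + ψ q.1 with hg
  have hmg : Measurable g :=
    (measurable_const.mul ((measurable_pi_apply i₀).comp measurable_snd)).add
      (hmψ.comp measurable_fst)
  have hE0 : MeasurableSet (g ⁻¹' {(0 : ℝ)}) := hmg (measurableSet_singleton 0)
  have hevent : {ω | ∑ u : Fin d, c u * z i ω u = 0}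
      = (fun ω => (B ω, A ω)) ⁻¹' (g ⁻¹' {(0 : ℝ)}) := by
    ext ω
    simp only [Set.mem_setOf_eq, Set.mem_preimage, Set.mem_singleton_iff, hg]
    have hψval : ψ (B ω) = ∑ u ∈ Finset.univ.erase u₀, c u * z i ω u := by
      rw [hψ]
      simp only [hB]
      rw [Finset.sum_coe_sort T (fun p => c p.2.2 * f p ω)]
      rw [Finset.sum_image (by intro a _ b _ h; simpa using congrArg (fun q => q.2.2) h)]
      refine Finset.sum_congr rfl fun u _ => ?_
      simp [hf, coords]
    have hAval : A ω i₀ = z i ω u₀ := by simp [hA, hi₀, hf, coords, hp₀]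
    rw [hψval, hAval]
    rw [← Finset.add_sum_erase Finset.univ (fun u => c u * z i ω u) (Finset.mem_univ u₀)]
  rw [hevent, ← Measure.map_apply (hmB.prodMk hmA) hE0, hmap,
    Measure.prod_apply hE0]
  have hslice : ∀ b : T → ℝ,
      (Measure.map A ℙ) (Prod.mk b ⁻¹' (g ⁻¹' {(0 : ℝ)})) = 0 := by
    intro b
    have hset : (Prod.mk b ⁻¹' (g ⁻¹' {(0 : ℝ)}))
        = (fun s : ({p₀} : Finset (Bool × ℕ × Fin d)) → ℝ => s i₀) ⁻¹'
            {(-ψ b) / c u₀} := by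
      ext s
      simp only [Set.mem_preimage, Set.mem_singleton_iff, hg]
      rw [eq_div_iff hc, mul_comm]
      constructor <;> intro h <;> linarith
    rw [hset, Measure.map_apply hmA
        ((measurable_pi_apply i₀) (measurableSet_singleton _))]
    have hpre : A ⁻¹' ((fun s : ({p₀} : Finset (Bool × ℕ × Fin d)) → ℝ => s i₀) ⁻¹'
        {(-ψ b) / c u₀}) = f p₀ ⁻¹' {(-ψ b) / c u₀} := rfl
    rw [hpre, ← Measure.map_apply (hmeas p₀) (measurableSet_singleton _), hlaw p₀]
    exact (gaussianReal_absolutelyContinuous 0 one_ne_zero) (Real.volume_singleton)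
  rw [lintegral_congr hslice, lintegral_zero]

lemma ae_empPS {Ω : Type*} [MeasureSpace Ω] [IsProbabilityMeasure (ℙ : Measure Ω)]
    {d n : ℕ} (hd : 1 ≤ d) (hn : 1 ≤ n) (zbar z : ℕ → Ω → Fin d → ℝ)
    (hwn : IsWhiteNoisePair d zbar z) :
    ∀ᵐ ω ∂(ℙ : Measure Ω), ∀ k : Fin d, empPS d n (fun i => z i ω) k ≠ 0 := by
  rw [ae_all_iff]
  intro k
  rw [ae_iff]
  set u₀ : Fin d := ⟨0, hd⟩ with hu₀
  set c : Fin d → ℝ :=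
    fun u => (Complex.exp (-(2 * Real.pi * Complex.I * ((k : ℕ) : ℂ) * ((u : ℕ) : ℂ))
      / (d : ℂ))).re with hcdef
  have hc : c u₀ ≠ 0 := by
    have h0 : ((u₀ : ℕ) : ℂ) = 0 := by simp [hu₀]
    simp [hcdef, h0]
  have hnull := nullLinear zbar z hwn c u₀ hc 0
  refine measure_mono_null ?_ hnull
  intro ω hω
  simp only [Set.mem_setOf_eq, not_not] at hω ⊢
  have hn0 : ((n : ℝ))⁻¹ ≠ 0 := inv_ne_zero (Nat.cast_ne_zero.mpr (by omega))
  have h1 : ∑ i ∈ Finset.range n, Complex.normSq (dft d (z i ω) k) = 0 := by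
    unfold empPS at hω
    rcases mul_eq_zero.mp hω with h | h
    · exact absurd h hn0
    · exact h
  have h2 : Complex.normSq (dft d (z 0 ω) k) = 0 :=
    (Finset.sum_eq_zero_iff_of_nonneg (fun i _ => Complex.normSq_nonneg _)).mp h1 0
      (Finset.mem_range.mpr (by omega))
  have h3 : dft d (z 0 ω) k = 0 := by rwa [Complex.normSq_eq_zero] at h2
  have h4 : ∑ u : Fin d, c u * z 0 ω u = (dft d (z 0 ω) k).re := by
    unfold dft
    rw [Complex.re_sum]
    exact Finset.sum_congr rfl fun u _ => by rw [Complex.re_ofReal_mul, mul_comm]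
  rw [h4, h3]
  rfl

theorem stmt7 {d n : ℕ} (hd : 1 ≤ d) (hn : 1 ≤ n)
    {Ω : Type*} [MeasureSpace Ω] [IsProbabilityMeasure (ℙ : Measure Ω)]
    (abar : Fin d → ℝ) (zbar z : ℕ → Ω → Fin d → ℝ) (hwn : IsWhiteNoisePair d zbar z) :
    ∀ᵐ ω ∂ℙ, ∀ a₀ ∈ An d n abar (fun i => zbar i ω) (fun i => z i ω),
      (∀ ℓ : Fin d,
        rCpx d n (fun i => cconv d abar (zbar i ω)) (fun i => z i ω) a₀ (fourierDisc d ℓ)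
          = 0) ∧
      VCpx d n d (fun i => cconv d abar (zbar i ω)) (fun i => z i ω) a₀ (fourierDisc d)
          = 0 ∧
      (∀ u : Fin d,
        HasDerivAt (fun t : ℝ =>
          VCpx d n d (fun i => cconv d abar (zbar i ω)) (fun i => z i ω)
            (Function.update a₀ u t) (fourierDisc d)) 0 (a₀ u)) ∧
      (∀ ℓ v : Fin d,
        HasDerivAt (fun t : ℝ =>
          VCpx d n d (fun i => cconv d abar (zbar i ω)) (fun i => z i ω) a₀
            (Function.update (fourierDisc d) ℓ
              (Function.update (fourierDisc d ℓ) v (fourierDisc d ℓ v + (t : ℂ))))) 0 0) ∧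
      (∀ ℓ v : Fin d,
        HasDerivAt (fun t : ℝ =>
          VCpx d n d (fun i => cconv d abar (zbar i ω)) (fun i => z i ω) a₀
            (Function.update (fourierDisc d) ℓ
              (Function.update (fourierDisc d ℓ) v
                (fourierDisc d ℓ v + (t : ℂ) * Complex.I)))) 0 0) := by
  filter_upwards [ae_empPS hd hn zbar z hwn] with ω hω
  intro a₀ ha₀
  exact key hd _ _ a₀ hω ha₀
end
end

section
/- Under Assumption 1 (n ≥ 2, d even, ᾱ ∉ A_0), with m = d and β̊ the discrete Fourier discriminator β̊_ℓ(u) = e^{i2πℓu/d}: almost surely, for every α̊ ∈ A_n, the equilibrium (α̊, β̊) is not a Nash equilibrium of V_n; in fact there exists a discriminator parameter β with V_n(α̊, β) > 0 = V_n(α̊, β̊), and the Hessian of β ↦ V_n(α̊, β) (in the real and imaginary parts of the β-variables) at (α̊, β̊) is positive semidefinite with at least one strictly positive eigenvalue. -/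
open MeasureTheory ProbabilityTheory Filter Matrix
open scoped Real

noncomputable section

namespace S8

def ek (d : ℕ) (k : Fin d) : ℂ := Complex.exp (-(2 * Real.pi * Complex.I * ((k:ℕ):ℂ)) / (d:ℂ))
lemma dft_eq {d : ℕ} (x : Fin d → ℝ) (k : Fin d) :
    dft d x k = ∑ u : Fin d, (x u : ℂ) * ek d k ^ (u : ℕ) := by
  unfold dft ek
  refine Finset.sum_congr rfl fun u _ => ?_
  rw [← Complex.exp_nat_mul]
  ring_nf
lemma ek_pow_d {d : ℕ} (hd : 1 ≤ d) (k : Fin d) : ek d k ^ d = 1 := by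
  unfold ek
  rw [← Complex.exp_nat_mul]
  have hdne : (d : ℂ) ≠ 0 := Nat.cast_ne_zero.2 (by omega)
  have : (d : ℂ) * (-(2 * Real.pi * Complex.I * ((k:ℕ):ℂ)) / (d:ℂ))
      = ((-(k:ℕ) : ℤ) : ℂ) * (2 * Real.pi * Complex.I) := by
    field_simp; push_cast; ring
  rw [this, Complex.exp_int_mul_two_pi_mul_I]
lemma ek_pow_mod {d : ℕ} (hd : 1 ≤ d) (k : Fin d) (a : ℕ) :
    ek d k ^ a = ek d k ^ (a % d) := by
  conv_lhs => rw [← Nat.div_add_mod a d]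
  rw [pow_add, pow_mul, ek_pow_d hd, one_pow, one_mul]
lemma dft_cconv {d : ℕ} (hd : 1 ≤ d) (a x : Fin d → ℝ) (k : Fin d) :
    dft d (cconv d a x) k = dft d a k * dft d x k := by
  haveI : NeZero d := ⟨by omega⟩
  rw [dft_eq, dft_eq, dft_eq]
  unfold cconv
  have h1 : ∀ u : Fin d, ((∑ v : Fin d, a v * x (u-v) : ℝ) : ℂ) * ek d k ^ (u:ℕ)
      = ∑ v : Fin d, (a v : ℂ) * (x (u - v) : ℂ) * ek d k ^ (u:ℕ) := by
    intro u; push_cast; rw [Finset.sum_mul]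
  rw [Finset.sum_congr rfl (fun u _ => h1 u), Finset.sum_comm, Finset.sum_mul_sum]
  refine Finset.sum_congr rfl fun v _ => ?_
  rw [← Equiv.sum_comp (Equiv.addLeft v)
    (fun u => (a v : ℂ) * (x (u - v) : ℂ) * ek d k ^ ((u : Fin d):ℕ))]
  refine Finset.sum_congr rfl fun w _ => ?_
  show (a v : ℂ) * (x (v + w - v) : ℂ) * ek d k ^ ((v + w : Fin d) : ℕ) = _
  have h3 : ek d k ^ ((v + w : Fin d) : ℕ) = ek d k ^ (v:ℕ) * ek d k ^ (w:ℕ) := by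
    rw [← pow_add, ek_pow_mod hd k ((v:ℕ) + (w:ℕ)), Fin.val_add]
  rw [add_sub_cancel_left, h3]
  ring



lemma dft_k0 {d : ℕ} (h0 : (0:ℕ) < d) (x : Fin d → ℝ) :
    dft d x ⟨0, h0⟩ = ((∑ u : Fin d, x u : ℝ) : ℂ) := by
  unfold dft
  push_cast
  refine Finset.sum_congr rfl fun u _ => ?_
  norm_num

lemma dft_k1 {d : ℕ} (hdeven : Even d) (h1 : d / 2 < d) (x : Fin d → ℝ) :
    dft d x ⟨d/2, h1⟩ = ((∑ u : Fin d, (-1:ℝ)^(u:ℕ) * x u : ℝ) : ℂ) := by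
  unfold dft
  push_cast
  refine Finset.sum_congr rfl fun u _ => ?_
  have hd0 : (d:ℂ) ≠ 0 := Nat.cast_ne_zero.2 (by omega)
  have hdd : ((d/2 : ℕ) : ℂ) * 2 = (d : ℂ) := by
    obtain ⟨r, hr⟩ := hdeven
    subst hr
    have : (r + r) / 2 = r := by omega
    rw [this]
    push_cast
    ring
  have : (-(2 * (Real.pi:ℂ) * Complex.I * ((d/2 : ℕ):ℂ) * ((u:ℕ):ℂ)) / (d : ℂ))
      = ((u:ℕ):ℂ) * (-(Real.pi) * Complex.I) := by
    field_simp
    rw [← hdd]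
    ring
  rw [this, Complex.exp_nat_mul]
  have : Complex.exp (-(Real.pi) * Complex.I) = -1 := by
    rw [neg_mul, Complex.exp_neg, Complex.exp_pi_mul_I]
    norm_num
  rw [this]
  push_cast
  ring

lemma cInner_fourier {d : ℕ} (ℓ : Fin d) (x : Fin d → ℝ) :
    cInner d (fourierDisc d ℓ) x = dft d x ℓ := by
  unfold cInner fourierDisc dft
  refine Finset.sum_congr rfl fun u _ => ?_
  rw [← Complex.exp_conj]
  have : (starRingEnd ℂ) (2 * (Real.pi:ℂ) * Complex.I * ((ℓ:ℕ):ℂ) * ((u:ℕ):ℂ) / (d:ℂ))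
      = -(2 * (Real.pi:ℂ) * Complex.I * ((ℓ:ℕ):ℂ) * ((u:ℕ):ℂ)) / (d:ℂ) := by
    simp only [map_div₀, _root_.map_mul, Complex.conj_ofReal, Complex.conj_I, map_ofNat,
      map_natCast]
    ring
  rw [this, mul_comm]

lemma cInner_add_smul {d : ℕ} (b e : Fin d → ℂ) (t : ℝ) (y : Fin d → ℝ) :
    cInner d (fun v => b v + (t:ℂ) * e v) y = cInner d b y + (t:ℂ) * cInner d e y := by
  unfold cInner
  rw [Finset.mul_sum, ← Finset.sum_add_distrib]
  refine Finset.sum_congr rfl fun u _ => ?_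
  simp [_root_.map_mul, Complex.conj_ofReal]
  ring

lemma cInner_smul {d : ℕ} (c : ℂ) (e : Fin d → ℂ) (y : Fin d → ℝ) :
    cInner d (fun v => c * e v) y = (starRingEnd ℂ) c * cInner d e y := by
  unfold cInner
  rw [Finset.mul_sum]
  refine Finset.sum_congr rfl fun u _ => ?_
  simp [_root_.map_mul]; ring

lemma normSq_add_smul (A B : ℂ) (t : ℝ) :
    Complex.normSq (A + (t:ℂ) * B)
      = Complex.normSq A + t * (2 * (A * (starRingEnd ℂ) B).re) + t^2 * Complex.normSq B := by
  rw [Complex.normSq_add]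
  have h1 : Complex.normSq ((t:ℂ) * B) = t^2 * Complex.normSq B := by
    rw [Complex.normSq_mul, Complex.normSq_ofReal]; ring
  have h2 : (A * (starRingEnd ℂ) ((t:ℂ) * B)).re = t * (A * (starRingEnd ℂ) B).re := by
    rw [_root_.map_mul, Complex.conj_ofReal]
    have : A * ((t:ℂ) * (starRingEnd ℂ) B) = (t:ℂ) * (A * (starRingEnd ℂ) B) := by ring
    rw [this, Complex.re_ofReal_mul]
  rw [h1, h2]
  ring

def sdiag (d n : ℕ) (ys : ℕ → Fin d → ℝ) (k : Fin d) : ℝ :=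
  ∑ i ∈ Finset.range n, Complex.normSq (dft d (ys i) k)

def TS (d n : ℕ) (ys : ℕ → Fin d → ℝ) (k k' : Fin d) : ℂ :=
  ∑ i ∈ Finset.range n, dft d (ys i) k * (starRingEnd ℂ) (dft d (ys i) k')

def pcoef (d n : ℕ) (xs zs : ℕ → Fin d → ℝ) (a : Fin d → ℝ) (b e : Fin d → ℂ) : ℝ :=
  2 * ((n:ℝ)⁻¹ * ∑ i ∈ Finset.range n,
        (cInner d b (xs i) * (starRingEnd ℂ) (cInner d e (xs i))).re
    - (n:ℝ)⁻¹ * ∑ i ∈ Finset.range n,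
        (cInner d b (cconv d a (zs i)) * (starRingEnd ℂ) (cInner d e (cconv d a (zs i)))).re)

lemma empPS_eq (d n : ℕ) (ys : ℕ → Fin d → ℝ) (k : Fin d) :
    empPS d n ys k = (n:ℝ)⁻¹ * sdiag d n ys k := rfl

lemma rCpx_expand {d n : ℕ} (xs zs : ℕ → Fin d → ℝ) (a : Fin d → ℝ)
    (b e : Fin d → ℂ) (t : ℝ) :
    rCpx d n xs zs a (fun v => b v + (t:ℂ) * e v)
      = rCpx d n xs zs a b + t * pcoef d n xs zs a b e + t^2 * rCpx d n xs zs a e := by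
  unfold rCpx pcoef
  simp only [cInner_add_smul, normSq_add_smul]
  simp only [Finset.sum_add_distrib, ← Finset.mul_sum]
  ring

lemma rCpx_smul {d n : ℕ} (xs zs : ℕ → Fin d → ℝ) (a : Fin d → ℝ) (c : ℂ)
    (e : Fin d → ℂ) :
    rCpx d n xs zs a (fun v => c * e v) = Complex.normSq c * rCpx d n xs zs a e := by
  unfold rCpx
  simp only [cInner_smul, Complex.normSq_mul, Complex.normSq_conj, ← Finset.mul_sum]
  ring

lemma r_fourier {d n : ℕ} (hd : 1 ≤ d) (xs zs : ℕ → Fin d → ℝ) (a : Fin d → ℝ) (ℓ : Fin d) :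
    rCpx d n xs zs a (fourierDisc d ℓ)
      = empPS d n xs ℓ - Complex.normSq (dft d a ℓ) * empPS d n zs ℓ := by
  unfold rCpx empPS
  simp only [cInner_fourier, dft_cconv hd, Complex.normSq_mul, ← Finset.mul_sum]
  ring

lemma r_fourier_zero {d n : ℕ} (hd : 1 ≤ d) (xs zs : ℕ → Fin d → ℝ) (a : Fin d → ℝ)
    (ℓ : Fin d) (hz : empPS d n zs ℓ ≠ 0)
    (hA : Complex.normSq (dft d a ℓ) = empPS d n xs ℓ / empPS d n zs ℓ) :
    rCpx d n xs zs a (fourierDisc d ℓ) = 0 := by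
  rw [r_fourier hd, hA, div_mul_cancel₀ _ hz, sub_self]

lemma V_poly {d n : ℕ} (xs zs : ℕ → Fin d → ℝ) (a : Fin d → ℝ)
    (hdiag : ∀ ℓ : Fin d, rCpx d n xs zs a (fourierDisc d ℓ) = 0) (η : Fin d → Fin d → ℂ) :
    (fun t : ℝ => VCpx d n d xs zs a (fun ℓ v => fourierDisc d ℓ v + (t:ℂ) * η ℓ v))
      = fun t : ℝ =>
        (∑ ℓ : Fin d, pcoef d n xs zs a (fourierDisc d ℓ) (η ℓ) ^ 2) * t^2
        + (∑ ℓ : Fin d, 2 * pcoef d n xs zs a (fourierDisc d ℓ) (η ℓ)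
            * rCpx d n xs zs a (η ℓ)) * t^3
        + (∑ ℓ : Fin d, rCpx d n xs zs a (η ℓ) ^ 2) * t^4 := by
  funext t
  unfold VCpx
  have h : ∀ ℓ : Fin d,
      rCpx d n xs zs a (fun v => fourierDisc d ℓ v + (t:ℂ) * η ℓ v) ^ 2
        = pcoef d n xs zs a (fourierDisc d ℓ) (η ℓ) ^ 2 * t^2
          + (2 * pcoef d n xs zs a (fourierDisc d ℓ) (η ℓ) * rCpx d n xs zs a (η ℓ)) * t^3
          + rCpx d n xs zs a (η ℓ) ^ 2 * t^4 := by
    intro ℓ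
    rw [rCpx_expand, hdiag ℓ]
    ring
  simp only [h]
  simp only [Finset.sum_add_distrib, ← Finset.sum_mul]

lemma it2 (a b c : ℝ) :
    iteratedDeriv 2 (fun t : ℝ => a*t^2 + b*t^3 + c*t^4) 0 = 2*a := by
  have hder : deriv (fun t : ℝ => a*t^2 + b*t^3 + c*t^4)
      = fun t => 2*a*t + 3*b*t^2 + 4*c*t^3 := by
    funext t
    have h : HasDerivAt (fun t : ℝ => a*t^2 + b*t^3 + c*t^4)
        (2*a*t + 3*b*t^2 + 4*c*t^3) t := by
      have h2 := (hasDerivAt_pow 2 t).const_mul a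
      have h3 := (hasDerivAt_pow 3 t).const_mul b
      have h4 := (hasDerivAt_pow 4 t).const_mul c
      refine HasDerivAt.congr_deriv ((h2.add h3).add h4) ?_
      push_cast
      ring
    exact h.deriv
  rw [show (2:ℕ) = 1 + 1 from rfl, iteratedDeriv_succ, iteratedDeriv_one, hder]
  have h : HasDerivAt (fun t : ℝ => 2*a*t + 3*b*t^2 + 4*c*t^3) (2*a) 0 := by
    have h1 := (hasDerivAt_id (0:ℝ)).const_mul (2*a)
    have h2 := (hasDerivAt_pow 2 (0:ℝ)).const_mul (3*b)
    have h3 := (hasDerivAt_pow 3 (0:ℝ)).const_mul (4*c)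
    refine HasDerivAt.congr_deriv ((h1.add h2).add h3) ?_
    push_cast
    ring
  rw [h.deriv]

lemma pcoef_special {d n : ℕ} (hd : 1 ≤ d) (xs zs : ℕ → Fin d → ℝ) (a : Fin d → ℝ)
    (k₀ k₁ : Fin d) (W : ℂ)
    (hWdef : W = TS d n xs k₀ k₁
        - (dft d a k₀ * (starRingEnd ℂ) (dft d a k₁)) * TS d n zs k₀ k₁) :
    pcoef d n xs zs a (fourierDisc d k₀)
        (fun v => (starRingEnd ℂ) W * fourierDisc d k₁ v)
      = 2 * ((n:ℝ)⁻¹ * Complex.normSq W) := by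
  unfold pcoef
  simp only [cInner_fourier, cInner_smul, dft_cconv hd, RingHom.id_apply, _root_.map_mul,
    Complex.conj_conj]
  have h1 : ∑ i ∈ Finset.range n,
      (dft d (xs i) k₀ * ((starRingEnd ℂ) W * (starRingEnd ℂ) (dft d (xs i) k₁))).re
      = ((starRingEnd ℂ) W * TS d n xs k₀ k₁).re := by
    rw [TS, Finset.mul_sum, Complex.re_sum]
    exact Finset.sum_congr rfl fun i _ => by congr 1; ring
  have h2 : ∑ i ∈ Finset.range n,
      (dft d a k₀ * dft d (zs i) k₀ *
        ((starRingEnd ℂ) W * ((starRingEnd ℂ) (dft d a k₁) * (starRingEnd ℂ) (dft d (zs i) k₁)))).re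
      = ((starRingEnd ℂ) W *
          (dft d a k₀ * (starRingEnd ℂ) (dft d a k₁) * TS d n zs k₀ k₁)).re := by
    rw [TS, Finset.mul_sum, Finset.mul_sum, Complex.re_sum]
    exact Finset.sum_congr rfl fun i _ => by congr 1; ring
  rw [h1, h2]
  have h3 : (starRingEnd ℂ) W * TS d n xs k₀ k₁
      - (starRingEnd ℂ) W * (dft d a k₀ * (starRingEnd ℂ) (dft d a k₁) * TS d n zs k₀ k₁)
      = ((Complex.normSq W : ℝ) : ℂ) := by
    rw [← mul_sub, ← hWdef, mul_comm, Complex.mul_conj]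
  have h4 : (n:ℝ)⁻¹ * ((starRingEnd ℂ) W * TS d n xs k₀ k₁).re
      - (n:ℝ)⁻¹ * ((starRingEnd ℂ) W *
          (dft d a k₀ * (starRingEnd ℂ) (dft d a k₁) * TS d n zs k₀ k₁)).re
      = (n:ℝ)⁻¹ * Complex.normSq W := by
    rw [← mul_sub, ← Complex.sub_re, h3, Complex.ofReal_re]
  rw [h4]

theorem det_main {d n : ℕ} (hd : 1 ≤ d) (hn : 2 ≤ n) (xs zs : ℕ → Fin d → ℝ)
    (k₀ k₁ : Fin d) (hz : ∀ k, 0 < empPS d n zs k)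
    (hNE : Complex.normSq (TS d n xs k₀ k₁) * (sdiag d n zs k₀ * sdiag d n zs k₁)
           ≠ (sdiag d n xs k₀ * sdiag d n xs k₁) * Complex.normSq (TS d n zs k₀ k₁))
    (a₀ : Fin d → ℝ)
    (hA : ∀ k, Complex.normSq (dft d a₀ k) = empPS d n xs k / empPS d n zs k) :
    (¬ ((∀ b : Fin d → Fin d → ℂ,
          VCpx d n d xs zs a₀ b ≤ VCpx d n d xs zs a₀ (fourierDisc d)) ∧
        (∀ a : Fin d → ℝ,
          VCpx d n d xs zs a₀ (fourierDisc d) ≤ VCpx d n d xs zs a (fourierDisc d)))) ∧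
    VCpx d n d xs zs a₀ (fourierDisc d) = 0 ∧
    (∃ b : Fin d → Fin d → ℂ, 0 < VCpx d n d xs zs a₀ b) ∧
    (∀ η : Fin d → Fin d → ℂ,
      0 ≤ iteratedDeriv 2 (fun t : ℝ =>
        VCpx d n d xs zs a₀ (fun ℓ v => fourierDisc d ℓ v + (t : ℂ) * η ℓ v)) 0) ∧
    (∃ η : Fin d → Fin d → ℂ,
      0 < iteratedDeriv 2 (fun t : ℝ =>
        VCpx d n d xs zs a₀ (fun ℓ v => fourierDisc d ℓ v + (t : ℂ) * η ℓ v)) 0) := by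
  haveI : NeZero d := ⟨by omega⟩
  have hn0 : (0:ℝ) < (n:ℝ)⁻¹ := by
    rw [inv_pos]; exact_mod_cast (by omega : 0 < n)
  -- diagonal r's vanish
  have hdiag : ∀ ℓ : Fin d, rCpx d n xs zs a₀ (fourierDisc d ℓ) = 0 := fun ℓ =>
    r_fourier_zero hd xs zs a₀ ℓ (ne_of_gt (hz ℓ)) (hA ℓ)
  -- V at fourierDisc is zero
  have hV0 : VCpx d n d xs zs a₀ (fourierDisc d) = 0 := by
    unfold VCpx
    exact Finset.sum_eq_zero fun ℓ _ => by rw [hdiag ℓ]; ring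
  -- the off-diagonal residual W is nonzero
  set W : ℂ := TS d n xs k₀ k₁
      - (dft d a₀ k₀ * (starRingEnd ℂ) (dft d a₀ k₁)) * TS d n zs k₀ k₁ with hWdef
  have hsz : ∀ k, 0 < sdiag d n zs k := by
    intro k
    have := hz k
    rw [empPS_eq] at this
    nlinarith [this, hn0]
  have hW : W ≠ 0 := by
    intro h
    apply hNE
    have hTx : TS d n xs k₀ k₁
        = (dft d a₀ k₀ * (starRingEnd ℂ) (dft d a₀ k₁)) * TS d n zs k₀ k₁ := by
      have := sub_eq_zero.1 h
      exact this
    have hnorm : Complex.normSq (TS d n xs k₀ k₁)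
        = Complex.normSq (dft d a₀ k₀) * Complex.normSq (dft d a₀ k₁)
          * Complex.normSq (TS d n zs k₀ k₁) := by
      rw [hTx, Complex.normSq_mul, Complex.normSq_mul, Complex.normSq_conj]
    have hratio : ∀ k, Complex.normSq (dft d a₀ k) = sdiag d n xs k / sdiag d n zs k := by
      intro k
      rw [hA k, empPS_eq, empPS_eq, mul_div_mul_left _ _ (ne_of_gt hn0)]
    have hB : sdiag d n zs k₀ * sdiag d n zs k₁ ≠ 0 :=
      ne_of_gt (mul_pos (hsz k₀) (hsz k₁))
    rw [hnorm, hratio, hratio, div_mul_div_comm, mul_right_comm, div_mul_cancel₀ _ hB]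
  have hnormW : 0 < Complex.normSq W := Complex.normSq_pos.2 hW
  -- the good discriminator row
  set bl : Fin d → ℂ := fun v => fourierDisc d k₀ v
      + ((1:ℝ):ℂ) * ((starRingEnd ℂ) W * fourierDisc d k₁ v) with hbl
  have hrbl : rCpx d n xs zs a₀ bl = 2 * ((n:ℝ)⁻¹ * Complex.normSq W) := by
    rw [hbl]
    rw [rCpx_expand xs zs a₀ (fourierDisc d k₀)
      (fun v => (starRingEnd ℂ) W * fourierDisc d k₁ v) 1]
    rw [hdiag k₀, rCpx_smul, hdiag k₁, pcoef_special hd xs zs a₀ k₀ k₁ W hWdef]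
    ring
  have hVpos : 0 < VCpx d n d xs zs a₀ (fun _ => bl) := by
    unfold VCpx
    refine Finset.sum_pos (fun ℓ _ => ?_) ⟨⟨0, by omega⟩, Finset.mem_univ _⟩
    rw [hrbl]
    positivity
  refine ⟨?_, hV0, ⟨fun _ => bl, hVpos⟩, ?_, ?_⟩
  · rintro ⟨h1, -⟩
    have := h1 (fun _ => bl)
    rw [hV0] at this
    linarith
  · intro η
    rw [V_poly xs zs a₀ hdiag η, it2]
    have : 0 ≤ ∑ ℓ : Fin d, pcoef d n xs zs a₀ (fourierDisc d ℓ) (η ℓ) ^ 2 :=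
      Finset.sum_nonneg fun ℓ _ => sq_nonneg _
    linarith
  · refine ⟨fun ℓ v => if ℓ = k₀ then (starRingEnd ℂ) W * fourierDisc d k₁ v else 0, ?_⟩
    set η : Fin d → Fin d → ℂ :=
      fun ℓ v => if ℓ = k₀ then (starRingEnd ℂ) W * fourierDisc d k₁ v else 0 with hη
    rw [V_poly xs zs a₀ hdiag η, it2]
    have hηk : η k₀ = fun v => (starRingEnd ℂ) W * fourierDisc d k₁ v := by
      funext v; simp [hη]
    have hp : pcoef d n xs zs a₀ (fourierDisc d k₀) (η k₀)
        = 2 * ((n:ℝ)⁻¹ * Complex.normSq W) := by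
      rw [hηk, pcoef_special hd xs zs a₀ k₀ k₁ W hWdef]
    have hle : pcoef d n xs zs a₀ (fourierDisc d k₀) (η k₀) ^ 2
        ≤ ∑ ℓ : Fin d, pcoef d n xs zs a₀ (fourierDisc d ℓ) (η ℓ) ^ 2 :=
      Finset.single_le_sum (f := fun ℓ => pcoef d n xs zs a₀ (fourierDisc d ℓ) (η ℓ) ^ 2)
        (fun ℓ _ => sq_nonneg _) (Finset.mem_univ k₀)
    have : 0 < pcoef d n xs zs a₀ (fourierDisc d k₀) (η k₀) ^ 2 := by
      rw [hp]; positivity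
    linarith

lemma key {Ω : Type*} [MeasureSpace Ω] [IsProbabilityMeasure (ℙ : Measure Ω)] {N : ℕ}
    (X : Ω → ℝ) (c : Fin N → Ω → ℝ) (hX : Measurable X)
    (hc : Measurable fun ω (j : Fin N) => c j ω)
    (hind : IndepFun X (fun ω (j : Fin N) => c j ω) ℙ)
    (hlaw : Measure.map X ℙ = gaussianReal 0 1) :
    ∀ᵐ ω ∂ℙ, (∑ j : Fin N, c j ω * X ω ^ (j:ℕ) = 0) → ∀ j, c j ω = 0 := by
  set C : Ω → (Fin N → ℝ) := fun ω j => c j ω with hC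
  have hprod : Measure.map (fun ω => (X ω, C ω)) ℙ
      = (gaussianReal 0 1).prod (Measure.map C ℙ) := by
    rw [← hlaw]
    exact (indepFun_iff_map_prod_eq_prod_map_map hX.aemeasurable hc.aemeasurable).1 hind
  set E : Set (ℝ × (Fin N → ℝ)) :=
    {q | (∑ j : Fin N, q.2 j * q.1 ^ (j:ℕ)) = 0 ∧ ¬ ∀ j, q.2 j = 0} with hE
  have hfm : Measurable fun q : ℝ × (Fin N → ℝ) => ∑ j : Fin N, q.2 j * q.1 ^ (j:ℕ) :=
    Finset.measurable_sum _ fun j _ =>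
      ((measurable_pi_apply j).comp measurable_snd).mul (measurable_fst.pow_const _)
  have hEm : MeasurableSet E := by
    have h1 : MeasurableSet {q : ℝ × (Fin N → ℝ) | (∑ j : Fin N, q.2 j * q.1 ^ (j:ℕ)) = 0} :=
      hfm (measurableSet_singleton 0)
    have h2 : MeasurableSet {q : ℝ × (Fin N → ℝ) | ¬ ∀ j, q.2 j = 0} := by
      have : {q : ℝ × (Fin N → ℝ) | ¬ ∀ j, q.2 j = 0}
          = ⋃ j : Fin N, {q : ℝ × (Fin N → ℝ) | q.2 j ≠ 0} := by
        ext q; simp [not_forall]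
      rw [this]
      exact MeasurableSet.iUnion fun j =>
        (((measurable_pi_apply j).comp measurable_snd) (measurableSet_singleton 0)).compl
    exact h1.inter h2
  haveI : IsProbabilityMeasure (Measure.map C ℙ) := Measure.isProbabilityMeasure_map hc.aemeasurable
  have hsec : ∀ v : Fin N → ℝ, gaussianReal 0 1 ((fun x => (x, v)) ⁻¹' E) = 0 := by
    intro v
    by_cases hv : ∀ j, v j = 0
    · have : ((fun x => (x, v)) ⁻¹' E) = ∅ := by
        ext x; simp only [hE, Set.mem_preimage, Set.mem_setOf_eq, Set.mem_empty_iff_false,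
          iff_false, not_and, not_not]
        exact fun _ => hv
      rw [this, measure_empty]
    · push_neg at hv
      obtain ⟨j₀, hj₀⟩ := hv
      set P : Polynomial ℝ := ∑ j : Fin N, Polynomial.C (v j) * Polynomial.X ^ (j:ℕ) with hP
      have hco : P.coeff (j₀:ℕ) = v j₀ := by
        rw [hP, Polynomial.finset_sum_coeff]
        simp only [Polynomial.coeff_C_mul, Polynomial.coeff_X_pow]
        rw [Finset.sum_eq_single j₀]
        · simp
        · intro j _ hjne
          rw [if_neg (fun h => hjne (Fin.val_inj.mp h).symm), mul_zero]
        · intro h; exact absurd (Finset.mem_univ j₀) h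
      have hPne : P ≠ 0 := fun h => hj₀ (by rw [← hco, h, Polynomial.coeff_zero])
      have hfin : {x : ℝ | P.IsRoot x}.Finite := Polynomial.finite_setOf_isRoot hPne
      have hsub : ((fun x => (x, v)) ⁻¹' E) ⊆ {x : ℝ | P.IsRoot x} := by
        intro x hx
        have h1 := hx.1
        simp only [Set.mem_setOf_eq, Polynomial.IsRoot, hP, Polynomial.eval_finset_sum]
        simp only [Polynomial.eval_mul, Polynomial.eval_C, Polynomial.eval_pow,
          Polynomial.eval_X]
        exact h1
      exact measure_mono_null hsub
        ((gaussianReal_absolutelyContinuous 0 one_ne_zero)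
          (hfin.countable.measure_zero volume))
  have h0 : ℙ ((fun ω => (X ω, C ω)) ⁻¹' E) = 0 := by
    have hmap : ℙ ((fun ω => (X ω, C ω)) ⁻¹' E)
        = ((gaussianReal 0 1).prod (Measure.map C ℙ)) E := by
      rw [← hprod, Measure.map_apply (hX.prodMk hc) hEm]
    rw [hmap, Measure.prod_apply_symm hEm]
    simp only [hsec]
    simp
  rw [ae_iff]
  have hset : {ω | ¬ ((∑ j : Fin N, c j ω * X ω ^ (j:ℕ) = 0) → ∀ j, c j ω = 0)}
      = (fun ω => (X ω, C ω)) ⁻¹' E := by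
    ext ω
    simp only [Set.mem_setOf_eq, Set.mem_preimage, hE, Classical.not_imp]
    exact Iff.rfl
  rw [hset]
  exact h0
variable {Ω : Type*} [MeasureSpace Ω] [IsProbabilityMeasure (ℙ : Measure Ω)]
variable {d n : ℕ} {zbar z : ℕ → Ω → Fin d → ℝ}

lemma coords_meas (hwn : IsWhiteNoisePair d zbar z) (p : Bool × ℕ × Fin d) :
    Measurable (coords d zbar z p) := by
  rcases p with ⟨b, i, u⟩
  cases b
  · exact (measurable_pi_apply u).comp (hwn.1 i)
  · exact (measurable_pi_apply u).comp (hwn.2.1 i)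

def bigT (d n : ℕ) (p₀ : Bool × ℕ × Fin d) : Finset (Bool × ℕ × Fin d) :=
  (((Finset.univ : Finset Bool) ×ˢ ((Finset.range n) ×ˢ (Finset.univ : Finset (Fin d)))).erase p₀)

lemma mem_bigT {p₀ q : Bool × ℕ × Fin d} :
    q ∈ bigT d n p₀ ↔ q ≠ p₀ ∧ q.2.1 < n := by
  simp [bigT, Finset.mem_erase, Finset.mem_product]

def mask (d n : ℕ) (zbar z : ℕ → Ω → Fin d → ℝ) (p₀ : Bool × ℕ × Fin d) (ω : Ω) :
    (Bool × ℕ × Fin d) → ℝ :=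
  fun q => if _h : q ∈ bigT d n p₀ then coords d zbar z q ω else 0

lemma mask_eq {p₀ q : Bool × ℕ × Fin d} (hne : q ≠ p₀) (hq : q.2.1 < n) (ω : Ω) :
    mask d n zbar z p₀ ω q = coords d zbar z q ω := dif_pos (mem_bigT.2 ⟨hne, hq⟩)

lemma key_mask (hwn : IsWhiteNoisePair d zbar z) (p₀ : Bool × ℕ × Fin d) {N : ℕ}
    (F : ((Bool × ℕ × Fin d) → ℝ) → (Fin N → ℝ)) (hF : Measurable F) :
    ∀ᵐ ω ∂ℙ,
      (∑ j : Fin N, F (mask d n zbar z p₀ ω) j * (coords d zbar z p₀ ω) ^ (j:ℕ) = 0)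
        → ∀ j, F (mask d n zbar z p₀ ω) j = 0 := by
  have hmaskm : Measurable (fun ω => mask d n zbar z p₀ ω) := by
    apply measurable_pi_lambda
    intro q
    by_cases h : q ∈ bigT d n p₀
    · simpa [mask, dif_pos h] using coords_meas hwn q
    · simp only [mask, dif_neg h]
      exact measurable_const
  have hc : Measurable fun ω (j : Fin N) => F (mask d n zbar z p₀ ω) j := hF.comp hmaskm
  have hind : IndepFun (coords d zbar z p₀)
      (fun ω (j : Fin N) => F (mask d n zbar z p₀ ω) j) ℙ := by
    have hdisj : Disjoint ({p₀} : Finset (Bool × ℕ × Fin d)) (bigT d n p₀) := by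
      simp [Finset.disjoint_singleton_left, bigT]
    have hi := hwn.2.2.1.indepFun_finset {p₀} (bigT d n p₀) hdisj (coords_meas hwn)
    have hφ : Measurable fun v : (({p₀} : Finset (Bool × ℕ × Fin d)) → ℝ) =>
        v ⟨p₀, Finset.mem_singleton_self p₀⟩ := measurable_pi_apply _
    have hψ : Measurable fun v : ({q // q ∈ bigT d n p₀} → ℝ) =>
        F (fun q => if h : q ∈ bigT d n p₀ then v ⟨q, h⟩ else 0) := by
      apply hF.comp
      apply measurable_pi_lambda
      intro q
      by_cases h : q ∈ bigT d n p₀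
      · simpa [dif_pos h] using (measurable_pi_apply (⟨q, h⟩ : {q // q ∈ bigT d n p₀}))
      · simp only [dif_neg h]
        exact measurable_const
    exact hi.comp hφ hψ
  exact key _ _ (coords_meas hwn p₀) hc hind (hwn.2.2.2 p₀)

lemma dft_re {d : ℕ} (x : Fin d → ℝ) (k : Fin d) :
    (dft d x k).re = ∑ u : Fin d, Real.cos (-(2*Real.pi*((k:ℕ):ℝ)*((u:ℕ):ℝ))/(d:ℝ)) * x u := by
  unfold dft
  rw [Complex.re_sum]
  refine Finset.sum_congr rfl fun u _ => ?_
  have h : (-(2 * (Real.pi:ℂ) * Complex.I * ((k:ℕ):ℂ) * ((u:ℕ):ℂ)) / (d:ℂ))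
      = ((-(2*Real.pi*((k:ℕ):ℝ)*((u:ℕ):ℝ))/(d:ℝ) : ℝ) : ℂ) * Complex.I := by
    push_cast; ring
  rw [h, Complex.re_ofReal_mul, Complex.exp_ofReal_mul_I_re]
  ring

lemma ae_dft_ne (hwn : IsWhiteNoisePair d zbar z) (hd : 1 ≤ d) (b : Bool) (i : ℕ)
    (hi : i < n) (k : Fin d) :
    ∀ᵐ ω ∂ℙ, dft d (fun u => coords d zbar z (b, i, u) ω) k ≠ 0 := by
  have h0 : (0:ℕ) < d := hd
  set u0 : Fin d := ⟨0, h0⟩ with hu0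
  set p₀ : Bool × ℕ × Fin d := (b, i, u0) with hp₀
  set F : ((Bool × ℕ × Fin d) → ℝ) → Fin 2 → ℝ := fun v j =>
    if (j:ℕ) = 0 then ∑ u ∈ Finset.univ.erase u0,
        Real.cos (-(2*Real.pi*((k:ℕ):ℝ)*((u:ℕ):ℝ))/(d:ℝ)) * v (b, i, u)
    else 1 with hFdef
  have hF : Measurable F := by
    apply measurable_pi_lambda
    intro j
    by_cases hj : (j:ℕ) = 0
    · simp only [hFdef, if_pos hj]
      exact Finset.measurable_sum _ fun u _ => (measurable_pi_apply _).const_mul _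
    · simp only [hFdef, if_neg hj]
      exact measurable_const
  filter_upwards [key_mask (n := n) hwn p₀ F hF] with ω hω hdft
  have hre : (dft d (fun u => coords d zbar z (b,i,u) ω) k).re = 0 := by
    rw [hdft]; rfl
  rw [dft_re] at hre
  rw [← Finset.add_sum_erase _ _ (Finset.mem_univ u0)] at hre
  have hm : ∀ u ∈ Finset.univ.erase u0,
      mask d n zbar z p₀ ω (b,i,u) = coords d zbar z (b,i,u) ω := by
    intro u hu
    refine mask_eq ?_ hi ω
    simp only [hp₀, ne_eq, Prod.mk.injEq, not_and]
    intro _ _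
    exact (Finset.mem_erase.1 hu).1
  have hcos0 : Real.cos (-(2*Real.pi*((k:ℕ):ℝ)*((u0:ℕ):ℝ))/(d:ℝ)) = 1 := by
    have h9 : ((u0:ℕ):ℝ) = 0 := by simp [hu0]
    rw [h9]
    norm_num
  rw [hcos0, one_mul] at hre
  have heval : ∑ j : Fin 2, F (mask d n zbar z p₀ ω) j * (coords d zbar z p₀ ω) ^ (j:ℕ)
      = 0 := by
    rw [Fin.sum_univ_two]
    have hF0 : F (mask d n zbar z p₀ ω) 0
        = ∑ u ∈ Finset.univ.erase u0,
            Real.cos (-(2*Real.pi*((k:ℕ):ℝ)*((u:ℕ):ℝ))/(d:ℝ)) * coords d zbar z (b,i,u) ω := by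
      simp only [hFdef, Fin.val_zero, if_pos rfl]
      exact Finset.sum_congr rfl fun u hu => by rw [hm u hu]
    have hF1 : F (mask d n zbar z p₀ ω) 1 = 1 := by
      simp only [hFdef]
      norm_num
    rw [hF0, hF1]
    rw [show ((0:Fin 2):ℕ) = 0 from rfl, show ((1:Fin 2):ℕ) = 1 from rfl, pow_zero, pow_one]
    have hX : coords d zbar z p₀ ω = coords d zbar z (b,i,u0) ω := by rw [hp₀]
    rw [hX]
    linarith [hre]
  have hone := hω heval 1
  rw [show F (mask d n zbar z p₀ ω) 1 = 1 from by simp only [hFdef]; norm_num] at hone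
  exact one_ne_zero hone


/-- `P` value: plain sum of a sample. -/
def Pv (d : ℕ) {Ω : Type*} (zbar z : ℕ → Ω → Fin d → ℝ) (b : Bool) (i : ℕ) (ω : Ω) : ℝ :=
  ∑ u : Fin d, coords d zbar z (b, i, u) ω

/-- `Q` value: alternating sum of a sample. -/
def Qv (d : ℕ) {Ω : Type*} (zbar z : ℕ → Ω → Fin d → ℝ) (b : Bool) (i : ℕ) (ω : Ω) : ℝ :=
  ∑ u : Fin d, (-1:ℝ)^((u:Fin d):ℕ) * coords d zbar z (b, i, u) ω

lemma ae_QsubP (hwn : IsWhiteNoisePair d zbar z) (hd2 : 2 ≤ d) (hn : 2 ≤ n) :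
    ∀ᵐ ω ∂ℙ, Qv d zbar z true 1 ω - Pv d zbar z true 1 ω ≠ 0 := by
  set u1 : Fin d := ⟨1, by omega⟩ with hu1
  set p₀ : Bool × ℕ × Fin d := (true, 1, u1) with hp₀
  set F : ((Bool × ℕ × Fin d) → ℝ) → Fin 2 → ℝ := fun v j =>
    if (j:ℕ) = 0 then ∑ u ∈ Finset.univ.erase u1,
        ((-1:ℝ)^((u:Fin d):ℕ) - 1) * v (true, 1, u)
    else -2 with hFdef
  have hF : Measurable F := by
    apply measurable_pi_lambda
    intro j
    by_cases hj : (j:ℕ) = 0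
    · simp only [hFdef, if_pos hj]
      exact Finset.measurable_sum _ fun u _ => (measurable_pi_apply _).const_mul _
    · simp only [hFdef, if_neg hj]
      exact measurable_const
  filter_upwards [key_mask (n := n) hwn p₀ F hF] with ω hω hQP
  have hsplit : Qv d zbar z true 1 ω - Pv d zbar z true 1 ω
      = ∑ u : Fin d, ((-1:ℝ)^((u:Fin d):ℕ) - 1) * coords d zbar z (true, 1, u) ω := by
    unfold Qv Pv
    rw [← Finset.sum_sub_distrib]
    exact Finset.sum_congr rfl fun u _ => by ring
  rw [hsplit, ← Finset.add_sum_erase _ _ (Finset.mem_univ u1)] at hQP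
  have hc1 : ((-1:ℝ)^((u1:Fin d):ℕ) - 1) = -2 := by
    have h9 : ((u1 : Fin d):ℕ) = 1 := by simp [hu1]
    rw [h9]
    norm_num
  rw [hc1] at hQP
  have hm : ∀ u ∈ Finset.univ.erase u1,
      mask d n zbar z p₀ ω (true,1,u) = coords d zbar z (true,1,u) ω := by
    intro u hu
    refine mask_eq ?_ (show 1 < n by omega) ω
    simp only [hp₀, ne_eq, Prod.mk.injEq, not_and]
    intro _ _
    exact (Finset.mem_erase.1 hu).1
  have heval : ∑ j : Fin 2, F (mask d n zbar z p₀ ω) j * (coords d zbar z p₀ ω) ^ (j:ℕ)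
      = 0 := by
    rw [Fin.sum_univ_two]
    have hF0 : F (mask d n zbar z p₀ ω) 0
        = ∑ u ∈ Finset.univ.erase u1,
            ((-1:ℝ)^((u:Fin d):ℕ) - 1) * coords d zbar z (true,1,u) ω := by
      simp only [hFdef, Fin.val_zero, if_pos rfl]
      exact Finset.sum_congr rfl fun u hu => by rw [hm u hu]
    have hF1 : F (mask d n zbar z p₀ ω) 1 = -2 := by
      simp only [hFdef]
      norm_num
    rw [hF0, hF1]
    rw [show ((0:Fin 2):ℕ) = 0 from rfl, show ((1:Fin 2):ℕ) = 1 from rfl, pow_zero, pow_one]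
    have hX : coords d zbar z p₀ ω = coords d zbar z (true,1,u1) ω := by rw [hp₀]
    rw [hX]
    linarith [hQP]
  have htwo := hω heval 1
  rw [show F (mask d n zbar z p₀ ω) 1 = -2 from by simp only [hFdef]; norm_num] at htwo
  norm_num at htwo

lemma ae_det_ne (hwn : IsWhiteNoisePair d zbar z) (hd2 : 2 ≤ d) (hn : 2 ≤ n) :
    ∀ᵐ ω ∂ℙ, Pv d zbar z true 0 ω * Qv d zbar z true 1 ω
      - Pv d zbar z true 1 ω * Qv d zbar z true 0 ω ≠ 0 := by
  set u0 : Fin d := ⟨0, by omega⟩ with hu0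
  set p₀ : Bool × ℕ × Fin d := (true, 0, u0) with hp₀
  set F : ((Bool × ℕ × Fin d) → ℝ) → Fin 2 → ℝ := fun v j =>
    if (j:ℕ) = 0 then
      (∑ u ∈ Finset.univ.erase u0, v (true, 0, u))
        * (∑ u : Fin d, (-1:ℝ)^((u:Fin d):ℕ) * v (true, 1, u))
      - (∑ u : Fin d, v (true, 1, u))
        * (∑ u ∈ Finset.univ.erase u0, (-1:ℝ)^((u:Fin d):ℕ) * v (true, 0, u))
    else (∑ u : Fin d, (-1:ℝ)^((u:Fin d):ℕ) * v (true, 1, u))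
      - (∑ u : Fin d, v (true, 1, u)) with hFdef
  have hF : Measurable F := by
    apply measurable_pi_lambda
    intro j
    have hs1 : Measurable fun v : (Bool × ℕ × Fin d) → ℝ =>
        ∑ u ∈ Finset.univ.erase u0, v (true, 0, u) :=
      Finset.measurable_sum _ fun u _ => measurable_pi_apply _
    have hs2 : Measurable fun v : (Bool × ℕ × Fin d) → ℝ =>
        ∑ u : Fin d, (-1:ℝ)^((u:Fin d):ℕ) * v (true, 1, u) :=
      Finset.measurable_sum _ fun u _ => (measurable_pi_apply _).const_mul _
    have hs3 : Measurable fun v : (Bool × ℕ × Fin d) → ℝ =>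
        ∑ u : Fin d, v (true, 1, u) :=
      Finset.measurable_sum _ fun u _ => measurable_pi_apply _
    have hs4 : Measurable fun v : (Bool × ℕ × Fin d) → ℝ =>
        ∑ u ∈ Finset.univ.erase u0, (-1:ℝ)^((u:Fin d):ℕ) * v (true, 0, u) :=
      Finset.measurable_sum _ fun u _ => (measurable_pi_apply _).const_mul _
    by_cases hj : (j:ℕ) = 0
    · simp only [hFdef, if_pos hj]
      exact (hs1.mul hs2).sub (hs3.mul hs4)
    · simp only [hFdef, if_neg hj]
      exact hs2.sub hs3
  filter_upwards [key_mask (n := n) hwn p₀ F hF, ae_QsubP hwn hd2 hn] with ω hω hQP hD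
  -- mask identities
  have hm0 : ∀ u ∈ Finset.univ.erase u0,
      mask d n zbar z p₀ ω (true,0,u) = coords d zbar z (true,0,u) ω := by
    intro u hu
    refine mask_eq ?_ (show 0 < n by omega) ω
    simp only [hp₀, ne_eq, Prod.mk.injEq, not_and]
    intro _ _
    exact (Finset.mem_erase.1 hu).1
  have hm1 : ∀ u : Fin d,
      mask d n zbar z p₀ ω (true,1,u) = coords d zbar z (true,1,u) ω := by
    intro u
    refine mask_eq ?_ (show 1 < n by omega) ω
    simp only [hp₀, ne_eq, Prod.mk.injEq, not_and]
    intro _ h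
    omega
  set X : ℝ := coords d zbar z p₀ ω with hX
  set r : ℝ := ∑ u ∈ Finset.univ.erase u0, coords d zbar z (true,0,u) ω with hr
  set r' : ℝ := ∑ u ∈ Finset.univ.erase u0,
      (-1:ℝ)^((u:Fin d):ℕ) * coords d zbar z (true,0,u) ω with hr'
  have hP0 : Pv d zbar z true 0 ω = X + r := by
    unfold Pv
    rw [← Finset.add_sum_erase _ _ (Finset.mem_univ u0)]
  have hQ0 : Qv d zbar z true 0 ω = X + r' := by
    unfold Qv
    rw [← Finset.add_sum_erase _ _ (Finset.mem_univ u0), ← hr']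
    have h9 : (-1:ℝ)^((u0 : Fin d):ℕ) = 1 := by simp [hu0]
    rw [h9, one_mul, hX, hp₀]
  have e1 : ∑ u ∈ Finset.univ.erase u0, mask d n zbar z p₀ ω (true,0,u) = r :=
    Finset.sum_congr rfl fun u hu => hm0 u hu
  have e2 : ∑ u : Fin d, (-1:ℝ)^((u:Fin d):ℕ) * mask d n zbar z p₀ ω (true,1,u)
      = Qv d zbar z true 1 ω := Finset.sum_congr rfl fun u _ => by rw [hm1 u]
  have e3 : ∑ u : Fin d, mask d n zbar z p₀ ω (true,1,u) = Pv d zbar z true 1 ω :=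
    Finset.sum_congr rfl fun u _ => hm1 u
  have e4 : ∑ u ∈ Finset.univ.erase u0,
      (-1:ℝ)^((u:Fin d):ℕ) * mask d n zbar z p₀ ω (true,0,u) = r' :=
    Finset.sum_congr rfl fun u hu => by rw [hm0 u hu]
  have hF0 : F (mask d n zbar z p₀ ω) 0
      = r * Qv d zbar z true 1 ω - Pv d zbar z true 1 ω * r' := by
    simp only [hFdef, Fin.val_zero, if_pos rfl]
    rw [e1, e2, e3, e4]
    rw [if_pos trivial]
  have hF1 : F (mask d n zbar z p₀ ω) 1
      = Qv d zbar z true 1 ω - Pv d zbar z true 1 ω := by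
    simp only [hFdef, Fin.val_one]
    rw [if_neg one_ne_zero, e2, e3]
  have heval : ∑ j : Fin 2, F (mask d n zbar z p₀ ω) j * X ^ (j:ℕ) = 0 := by
    rw [Fin.sum_univ_two, hF0, hF1]
    rw [show ((0:Fin 2):ℕ) = 0 from rfl, show ((1:Fin 2):ℕ) = 1 from rfl, pow_zero, pow_one]
    rw [hP0, hQ0] at hD
    linear_combination hD
  have := hω heval 1
  rw [hF1] at this
  exact hQP this


lemma lagrange_aux {n : ℕ} (hn : 2 ≤ n) (P Q : ℕ → ℝ)
    (hD : P 0 * Q 1 - P 1 * Q 0 ≠ 0) :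
    (∑ i ∈ Finset.range n, P i * Q i)^2
      < (∑ i ∈ Finset.range n, P i^2) * (∑ i ∈ Finset.range n, Q i^2) := by
  have expand : ∑ i ∈ Finset.range n, ∑ j ∈ Finset.range n,
        (1:ℝ)/2 * (P i * Q j - P j * Q i)^2
      = ((∑ i ∈ Finset.range n, ∑ j ∈ Finset.range n, (1:ℝ)/2*(P i^2*Q j^2))
          + ∑ i ∈ Finset.range n, ∑ j ∈ Finset.range n, (1:ℝ)/2*(P j^2*Q i^2))
        - ∑ i ∈ Finset.range n, ∑ j ∈ Finset.range n, (P i*Q i)*(P j*Q j) := by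
    rw [← Finset.sum_add_distrib, ← Finset.sum_sub_distrib]
    refine Finset.sum_congr rfl fun i _ => ?_
    rw [← Finset.sum_add_distrib, ← Finset.sum_sub_distrib]
    refine Finset.sum_congr rfl fun j _ => ?_
    ring
  have hswap : (∑ i ∈ Finset.range n, ∑ j ∈ Finset.range n, (1:ℝ)/2*(P j^2*Q i^2))
      = ∑ i ∈ Finset.range n, ∑ j ∈ Finset.range n, (1:ℝ)/2*(P i^2*Q j^2) :=
    Finset.sum_comm
  have hA : ∑ i ∈ Finset.range n, ∑ j ∈ Finset.range n, (1:ℝ)/2*(P i^2*Q j^2)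
      = 1/2 * ((∑ i ∈ Finset.range n, P i^2) * (∑ i ∈ Finset.range n, Q i^2)) := by
    rw [Finset.sum_mul_sum, Finset.mul_sum]
    refine Finset.sum_congr rfl fun i _ => ?_
    rw [Finset.mul_sum]
  have hC : ∑ i ∈ Finset.range n, ∑ j ∈ Finset.range n, (P i*Q i)*(P j*Q j)
      = (∑ i ∈ Finset.range n, P i * Q i)^2 := by
    rw [pow_two, Finset.sum_mul_sum]
  have hid : (∑ i ∈ Finset.range n, P i^2) * (∑ i ∈ Finset.range n, Q i^2)
        - (∑ i ∈ Finset.range n, P i * Q i)^2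
      = ∑ i ∈ Finset.range n, ∑ j ∈ Finset.range n,
          (1:ℝ)/2 * (P i * Q j - P j * Q i)^2 := by
    rw [expand, hswap, hA, hC]
    ring
  have h0m : (0:ℕ) ∈ Finset.range n := Finset.mem_range.2 (by omega)
  have h1m : (1:ℕ) ∈ Finset.range n := Finset.mem_range.2 (by omega)
  have hterm : (1:ℝ)/2 * (P 0 * Q 1 - P 1 * Q 0)^2
      ≤ ∑ i ∈ Finset.range n, ∑ j ∈ Finset.range n,
          (1:ℝ)/2 * (P i * Q j - P j * Q i)^2 := by
    calc (1:ℝ)/2 * (P 0 * Q 1 - P 1 * Q 0)^2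
        ≤ ∑ j ∈ Finset.range n, (1:ℝ)/2 * (P 0 * Q j - P j * Q 0)^2 :=
          Finset.single_le_sum (f := fun j => (1:ℝ)/2 * (P 0 * Q j - P j * Q 0)^2)
            (fun j _ => by positivity) h1m
      _ ≤ _ :=
          Finset.single_le_sum
            (f := fun i => ∑ j ∈ Finset.range n, (1:ℝ)/2 * (P i * Q j - P j * Q i)^2)
            (fun i _ => Finset.sum_nonneg fun j _ => by positivity) h0m
  have hpos : 0 < (1:ℝ)/2 * (P 0 * Q 1 - P 1 * Q 0)^2 := by positivity
  nlinarith [hid, hterm, hpos]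

lemma ae_main_ne (hwn : IsWhiteNoisePair d zbar z) (hd2 : 2 ≤ d) (hn : 2 ≤ n) :
    ∀ᵐ ω ∂ℙ,
      (∑ i ∈ Finset.range n, Pv d zbar z false i ω * Qv d zbar z false i ω)^2
        * ((∑ i ∈ Finset.range n, Pv d zbar z true i ω^2)
           * (∑ i ∈ Finset.range n, Qv d zbar z true i ω^2))
      ≠ ((∑ i ∈ Finset.range n, Pv d zbar z false i ω^2)
          * (∑ i ∈ Finset.range n, Qv d zbar z false i ω^2))
        * (∑ i ∈ Finset.range n, Pv d zbar z true i ω * Qv d zbar z true i ω)^2 := by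
  set u0 : Fin d := ⟨0, by omega⟩ with hu0
  set p₀ : Bool × ℕ × Fin d := (false, 0, u0) with hp₀
  -- building blocks of the coefficient functions
  set vR : ((Bool × ℕ × Fin d) → ℝ) → ℝ :=
    fun v => ∑ u ∈ Finset.univ.erase u0, v (false, 0, u) with hvR
  set vR' : ((Bool × ℕ × Fin d) → ℝ) → ℝ :=
    fun v => ∑ u ∈ Finset.univ.erase u0, (-1:ℝ)^((u:Fin d):ℕ) * v (false, 0, u) with hvR'
  set vA' : ((Bool × ℕ × Fin d) → ℝ) → ℝ :=
    fun v => ∑ i ∈ (Finset.range n).erase 0, (∑ u : Fin d, v (false, i, u))^2 with hvA'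
  set vB' : ((Bool × ℕ × Fin d) → ℝ) → ℝ :=
    fun v => ∑ i ∈ (Finset.range n).erase 0,
      (∑ u : Fin d, (-1:ℝ)^((u:Fin d):ℕ) * v (false, i, u))^2 with hvB'
  set vC' : ((Bool × ℕ × Fin d) → ℝ) → ℝ :=
    fun v => ∑ i ∈ (Finset.range n).erase 0, (∑ u : Fin d, v (false, i, u))
      * (∑ u : Fin d, (-1:ℝ)^((u:Fin d):ℕ) * v (false, i, u)) with hvC'
  set vAA : ((Bool × ℕ × Fin d) → ℝ) → ℝ :=
    fun v => ∑ i ∈ Finset.range n, (∑ u : Fin d, v (true, i, u))^2 with hvAA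
  set vBB : ((Bool × ℕ × Fin d) → ℝ) → ℝ :=
    fun v => ∑ i ∈ Finset.range n,
      (∑ u : Fin d, (-1:ℝ)^((u:Fin d):ℕ) * v (true, i, u))^2 with hvBB
  set vCC : ((Bool × ℕ × Fin d) → ℝ) → ℝ :=
    fun v => ∑ i ∈ Finset.range n, (∑ u : Fin d, v (true, i, u))
      * (∑ u : Fin d, (-1:ℝ)^((u:Fin d):ℕ) * v (true, i, u)) with hvCC
  set F : ((Bool × ℕ × Fin d) → ℝ) → Fin 5 → ℝ := fun v j =>
    if (j:ℕ) = 0 then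
      (vR v * vR' v + vC' v)^2 * (vAA v * vBB v)
        - ((vR v^2 + vA' v) * (vR' v^2 + vB' v)) * vCC v^2
    else if (j:ℕ) = 1 then
      (2*(vR v + vR' v)*(vR v * vR' v + vC' v)) * (vAA v * vBB v)
        - (2*vR v*(vR' v^2 + vB' v) + 2*vR' v*(vR v^2 + vA' v)) * vCC v^2
    else if (j:ℕ) = 2 then
      (2*(vR v * vR' v + vC' v) + (vR v + vR' v)^2) * (vAA v * vBB v)
        - (vR v^2 + vA' v + vR' v^2 + vB' v + 4*vR v*vR' v) * vCC v^2
    else if (j:ℕ) = 3 then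
      (2*(vR v + vR' v)) * (vAA v * vBB v) - (2*(vR v + vR' v)) * vCC v^2
    else vAA v * vBB v - vCC v^2 with hFdef
  have hmR : Measurable vR := Finset.measurable_sum _ fun u _ => measurable_pi_apply _
  have hmR' : Measurable vR' :=
    Finset.measurable_sum _ fun u _ => (measurable_pi_apply _).const_mul _
  have hmsum : ∀ (b : Bool) (i : ℕ), Measurable fun v : (Bool × ℕ × Fin d) → ℝ =>
      ∑ u : Fin d, v (b, i, u) :=
    fun b i => Finset.measurable_sum _ fun u _ => measurable_pi_apply _
  have hmsum' : ∀ (b : Bool) (i : ℕ), Measurable fun v : (Bool × ℕ × Fin d) → ℝ =>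
      ∑ u : Fin d, (-1:ℝ)^((u:Fin d):ℕ) * v (b, i, u) :=
    fun b i => Finset.measurable_sum _ fun u _ => (measurable_pi_apply _).const_mul _
  have hmA' : Measurable vA' :=
    Finset.measurable_sum _ fun i _ => (hmsum false i).pow_const 2
  have hmB' : Measurable vB' :=
    Finset.measurable_sum _ fun i _ => (hmsum' false i).pow_const 2
  have hmC' : Measurable vC' :=
    Finset.measurable_sum _ fun i _ => (hmsum false i).mul (hmsum' false i)
  have hmAA : Measurable vAA :=
    Finset.measurable_sum _ fun i _ => (hmsum true i).pow_const 2
  have hmBB : Measurable vBB :=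
    Finset.measurable_sum _ fun i _ => (hmsum' true i).pow_const 2
  have hmCC : Measurable vCC :=
    Finset.measurable_sum _ fun i _ => (hmsum true i).mul (hmsum' true i)
  have hF : Measurable F := by
    apply measurable_pi_lambda
    intro j
    by_cases h0 : (j:ℕ) = 0
    · simp only [hFdef, if_pos h0]
      exact ((((hmR.mul hmR').add hmC').pow_const 2).mul (hmAA.mul hmBB)).sub
        ((((hmR.pow_const 2).add hmA').mul ((hmR'.pow_const 2).add hmB')).mul
          (hmCC.pow_const 2))
    · by_cases h1 : (j:ℕ) = 1
      · simp only [hFdef, if_neg h0, if_pos h1]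
        exact (((((hmR.add hmR').const_mul 2).mul ((hmR.mul hmR').add hmC'))).mul
            (hmAA.mul hmBB)).sub
          ((((hmR.const_mul 2).mul ((hmR'.pow_const 2).add hmB')).add
            ((hmR'.const_mul 2).mul ((hmR.pow_const 2).add hmA'))).mul (hmCC.pow_const 2))
      · by_cases h2 : (j:ℕ) = 2
        · simp only [hFdef, if_neg h0, if_neg h1, if_pos h2]
          exact (((((hmR.mul hmR').add hmC').const_mul 2).add
              ((hmR.add hmR').pow_const 2)).mul (hmAA.mul hmBB)).sub
            ((((((hmR.pow_const 2).add hmA').add (hmR'.pow_const 2)).add hmB').add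
              ((hmR.const_mul 4).mul hmR')).mul (hmCC.pow_const 2))
        · by_cases h3 : (j:ℕ) = 3
          · simp only [hFdef, if_neg h0, if_neg h1, if_neg h2, if_pos h3]
            exact (((hmR.add hmR').const_mul 2).mul (hmAA.mul hmBB)).sub
              (((hmR.add hmR').const_mul 2).mul (hmCC.pow_const 2))
          · simp only [hFdef, if_neg h0, if_neg h1, if_neg h2, if_neg h3]
            exact (hmAA.mul hmBB).sub (hmCC.pow_const 2)
  filter_upwards [key_mask (n := n) hwn p₀ F hF, ae_det_ne hwn hd2 hn] with ω hω hD hG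
  -- mask conversions
  have hmaskf0 : ∀ u ∈ Finset.univ.erase u0,
      mask d n zbar z p₀ ω (false,0,u) = coords d zbar z (false,0,u) ω := by
    intro u hu
    refine mask_eq ?_ (show 0 < n by omega) ω
    simp only [hp₀, ne_eq, Prod.mk.injEq, not_and]
    intro _ _
    exact (Finset.mem_erase.1 hu).1
  have hmaskfi : ∀ i ∈ (Finset.range n).erase 0, ∀ u : Fin d,
      mask d n zbar z p₀ ω (false,i,u) = coords d zbar z (false,i,u) ω := by
    intro i hi u
    obtain ⟨hi0, hin⟩ := Finset.mem_erase.1 hi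
    refine mask_eq ?_ (show i < n from Finset.mem_range.1 hin) ω
    simp only [hp₀, ne_eq, Prod.mk.injEq, not_and]
    intro _ h
    exact absurd h hi0
  have hmaskt : ∀ i ∈ Finset.range n, ∀ u : Fin d,
      mask d n zbar z p₀ ω (true,i,u) = coords d zbar z (true,i,u) ω := by
    intro i hi u
    refine mask_eq ?_ (show i < n from Finset.mem_range.1 hi) ω
    simp only [hp₀, ne_eq, Prod.mk.injEq, not_and]
    intro h
    exact absurd h (by simp)
  set X : ℝ := coords d zbar z p₀ ω with hX
  set r : ℝ := ∑ u ∈ Finset.univ.erase u0, coords d zbar z (false,0,u) ω with hr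
  set r' : ℝ := ∑ u ∈ Finset.univ.erase u0,
      (-1:ℝ)^((u:Fin d):ℕ) * coords d zbar z (false,0,u) ω with hr'
  set a' : ℝ := ∑ i ∈ (Finset.range n).erase 0, Pv d zbar z false i ω^2 with ha'
  set b' : ℝ := ∑ i ∈ (Finset.range n).erase 0, Qv d zbar z false i ω^2 with hb'
  set c' : ℝ := ∑ i ∈ (Finset.range n).erase 0,
      Pv d zbar z false i ω * Qv d zbar z false i ω with hc'
  -- evaluation of the coefficient blocks at the masked sample
  have eR : vR (mask d n zbar z p₀ ω) = r := Finset.sum_congr rfl hmaskf0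
  have eR' : vR' (mask d n zbar z p₀ ω) = r' :=
    Finset.sum_congr rfl fun u hu => by rw [hmaskf0 u hu]
  have esumt : ∀ i ∈ Finset.range n,
      (∑ u : Fin d, mask d n zbar z p₀ ω (true,i,u)) = Pv d zbar z true i ω :=
    fun i hi => Finset.sum_congr rfl fun u _ => hmaskt i hi u
  have esumt' : ∀ i ∈ Finset.range n,
      (∑ u : Fin d, (-1:ℝ)^((u:Fin d):ℕ) * mask d n zbar z p₀ ω (true,i,u))
        = Qv d zbar z true i ω :=
    fun i hi => Finset.sum_congr rfl fun u _ => by rw [hmaskt i hi u]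
  have esumf : ∀ i ∈ (Finset.range n).erase 0,
      (∑ u : Fin d, mask d n zbar z p₀ ω (false,i,u)) = Pv d zbar z false i ω :=
    fun i hi => Finset.sum_congr rfl fun u _ => hmaskfi i hi u
  have esumf' : ∀ i ∈ (Finset.range n).erase 0,
      (∑ u : Fin d, (-1:ℝ)^((u:Fin d):ℕ) * mask d n zbar z p₀ ω (false,i,u))
        = Qv d zbar z false i ω :=
    fun i hi => Finset.sum_congr rfl fun u _ => by rw [hmaskfi i hi u]
  have eAA : vAA (mask d n zbar z p₀ ω) = ∑ i ∈ Finset.range n, Pv d zbar z true i ω^2 :=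
    Finset.sum_congr rfl fun i hi => by rw [esumt i hi]
  have eBB : vBB (mask d n zbar z p₀ ω) = ∑ i ∈ Finset.range n, Qv d zbar z true i ω^2 :=
    Finset.sum_congr rfl fun i hi => by rw [esumt' i hi]
  have eCC : vCC (mask d n zbar z p₀ ω)
      = ∑ i ∈ Finset.range n, Pv d zbar z true i ω * Qv d zbar z true i ω :=
    Finset.sum_congr rfl fun i hi => by rw [esumt i hi, esumt' i hi]
  have eA' : vA' (mask d n zbar z p₀ ω) = a' :=
    Finset.sum_congr rfl fun i hi => by rw [esumf i hi]
  have eB' : vB' (mask d n zbar z p₀ ω) = b' :=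
    Finset.sum_congr rfl fun i hi => by rw [esumf' i hi]
  have eC' : vC' (mask d n zbar z p₀ ω) = c' :=
    Finset.sum_congr rfl fun i hi => by rw [esumf i hi, esumf' i hi]
  -- splitting off the distinguished coordinate
  have hP0 : Pv d zbar z false 0 ω = X + r := by
    unfold Pv
    rw [← Finset.add_sum_erase _ _ (Finset.mem_univ u0)]
  have hQ0 : Qv d zbar z false 0 ω = X + r' := by
    unfold Qv
    rw [← Finset.add_sum_erase _ _ (Finset.mem_univ u0), ← hr']
    have h9 : (-1:ℝ)^((u0 : Fin d):ℕ) = 1 := by simp [hu0]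
    rw [h9, one_mul, hX, hp₀]
  have h0mem : (0:ℕ) ∈ Finset.range n := Finset.mem_range.2 (by omega)
  have hAbar : ∑ i ∈ Finset.range n, Pv d zbar z false i ω^2 = (X+r)^2 + a' := by
    rw [← Finset.add_sum_erase _ _ h0mem, hP0, ha']
  have hBbar : ∑ i ∈ Finset.range n, Qv d zbar z false i ω^2 = (X+r')^2 + b' := by
    rw [← Finset.add_sum_erase _ _ h0mem, hQ0, hb']
  have hCbar : ∑ i ∈ Finset.range n, Pv d zbar z false i ω * Qv d zbar z false i ω
      = (X+r)*(X+r') + c' := by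
    rw [← Finset.add_sum_erase _ _ h0mem, hP0, hQ0, hc']
  -- the five coefficient values
  have hF0v : F (mask d n zbar z p₀ ω) 0
      = (r*r'+c')^2 * ((∑ i ∈ Finset.range n, Pv d zbar z true i ω^2)
          * (∑ i ∈ Finset.range n, Qv d zbar z true i ω^2))
        - ((r^2+a')*(r'^2+b'))
          * (∑ i ∈ Finset.range n, Pv d zbar z true i ω * Qv d zbar z true i ω)^2 := by
    simp only [hFdef]
    norm_num
    rw [eR, eR', eA', eB', eC', eAA, eBB, eCC]
  have hF1v : F (mask d n zbar z p₀ ω) 1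
      = (2*(r+r')*(r*r'+c')) * ((∑ i ∈ Finset.range n, Pv d zbar z true i ω^2)
          * (∑ i ∈ Finset.range n, Qv d zbar z true i ω^2))
        - (2*r*(r'^2+b') + 2*r'*(r^2+a'))
          * (∑ i ∈ Finset.range n, Pv d zbar z true i ω * Qv d zbar z true i ω)^2 := by
    simp only [hFdef]
    norm_num
    rw [eR, eR', eA', eB', eC', eAA, eBB, eCC]
  have hF2v : F (mask d n zbar z p₀ ω) 2
      = (2*(r*r'+c') + (r+r')^2) * ((∑ i ∈ Finset.range n, Pv d zbar z true i ω^2)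
          * (∑ i ∈ Finset.range n, Qv d zbar z true i ω^2))
        - (r^2+a'+r'^2+b'+4*r*r')
          * (∑ i ∈ Finset.range n, Pv d zbar z true i ω * Qv d zbar z true i ω)^2 := by
    simp only [hFdef]
    norm_num
    rw [eR, eR', eA', eB', eC', eAA, eBB, eCC]
  have hF3v : F (mask d n zbar z p₀ ω) 3
      = (2*(r+r')) * ((∑ i ∈ Finset.range n, Pv d zbar z true i ω^2)
          * (∑ i ∈ Finset.range n, Qv d zbar z true i ω^2))
        - (2*(r+r'))
          * (∑ i ∈ Finset.range n, Pv d zbar z true i ω * Qv d zbar z true i ω)^2 := by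
    simp only [hFdef]
    rw [show ((3:Fin 5):ℕ) = 3 from rfl]
    norm_num
    rw [eR, eR', eAA, eBB, eCC]
  have hF4v : F (mask d n zbar z p₀ ω) 4
      = (∑ i ∈ Finset.range n, Pv d zbar z true i ω^2)
          * (∑ i ∈ Finset.range n, Qv d zbar z true i ω^2)
        - (∑ i ∈ Finset.range n, Pv d zbar z true i ω * Qv d zbar z true i ω)^2 := by
    simp only [hFdef]
    rw [show ((4:Fin 5):ℕ) = 4 from rfl]
    norm_num
    rw [eAA, eBB, eCC]
  have heval : ∑ j : Fin 5, F (mask d n zbar z p₀ ω) j * X ^ (j:ℕ) = 0 := by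
    rw [Fin.sum_univ_five, hF0v, hF1v, hF2v, hF3v, hF4v]
    rw [show ((0:Fin 5):ℕ) = 0 from rfl, show ((1:Fin 5):ℕ) = 1 from rfl,
      show ((2:Fin 5):ℕ) = 2 from rfl, show ((3:Fin 5):ℕ) = 3 from rfl,
      show ((4:Fin 5):ℕ) = 4 from rfl]
    rw [hAbar, hBbar, hCbar] at hG
    linear_combination hG
  have h4 := hω heval 4
  rw [hF4v] at h4
  have hlag := lagrange_aux hn (fun i => Pv d zbar z true i ω) (fun i => Qv d zbar z true i ω) hD
  linarith [hlag, h4]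



end S8

theorem stmt8 {d n : ℕ} (hd : 1 ≤ d) (hdeven : Even d) (hn : 2 ≤ n)
    {Ω : Type*} [MeasureSpace Ω] [IsProbabilityMeasure (ℙ : Measure Ω)]
    (abar : Fin d → ℝ) (habar : ∀ k : Fin d, dft d abar k ≠ 0)
    (zbar z : ℕ → Ω → Fin d → ℝ) (hwn : IsWhiteNoisePair d zbar z) :
    ∀ᵐ ω ∂ℙ, ∀ a₀ ∈ An d n abar (fun i => zbar i ω) (fun i => z i ω),
      -- `(α̊, β̊)` is not a Nash equilibrium of `V_n`
      (¬ ((∀ b : Fin d → Fin d → ℂ,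
            VCpx d n d (fun i => cconv d abar (zbar i ω)) (fun i => z i ω) a₀ b ≤
              VCpx d n d (fun i => cconv d abar (zbar i ω)) (fun i => z i ω) a₀
                (fourierDisc d)) ∧
          (∀ a : Fin d → ℝ,
            VCpx d n d (fun i => cconv d abar (zbar i ω)) (fun i => z i ω) a₀
                (fourierDisc d) ≤
              VCpx d n d (fun i => cconv d abar (zbar i ω)) (fun i => z i ω) a
                (fourierDisc d)))) ∧
      -- `V_n(α̊, β̊) = 0` and there is `β` with `V_n(α̊, β) > 0`
      VCpx d n d (fun i => cconv d abar (zbar i ω)) (fun i => z i ω) a₀ (fourierDisc d)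
          = 0 ∧
      (∃ b : Fin d → Fin d → ℂ,
        0 < VCpx d n d (fun i => cconv d abar (zbar i ω)) (fun i => z i ω) a₀ b) ∧
      -- the Hessian of `β ↦ V_n(α̊, β)` (in the real and imaginary parts of `β`)
      -- at `β̊` is positive semidefinite ...
      (∀ η : Fin d → Fin d → ℂ,
        0 ≤ iteratedDeriv 2 (fun t : ℝ =>
          VCpx d n d (fun i => cconv d abar (zbar i ω)) (fun i => z i ω) a₀
            (fun ℓ v => fourierDisc d ℓ v + (t : ℂ) * η ℓ v)) 0) ∧
      -- ... with at least one strictly positive eigenvalue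
      (∃ η : Fin d → Fin d → ℂ,
        0 < iteratedDeriv 2 (fun t : ℝ =>
          VCpx d n d (fun i => cconv d abar (zbar i ω)) (fun i => z i ω) a₀
            (fun ℓ v => fourierDisc d ℓ v + (t : ℂ) * η ℓ v)) 0) := by

  classical
  have hd2 : 2 ≤ d := by
    rcases hdeven with ⟨r, hr⟩
    omega
  have h0d : 0 < d := hd
  have hhalf : d / 2 < d := by omega
  set k₀ : Fin d := ⟨0, h0d⟩ with hk₀
  set k₁ : Fin d := ⟨d/2, hhalf⟩ with hk₁
  have hae1 : ∀ᵐ ω ∂ℙ, ∀ k : Fin d,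
      dft d (fun u => coords d zbar z (true,0,u) ω) k ≠ 0 :=
    ae_all_iff.2 fun k => S8.ae_dft_ne (n := n) hwn hd true 0 (by omega) k
  have hae2 := S8.ae_main_ne (n := n) hwn hd2 hn
  filter_upwards [hae1, hae2] with ω h1 h2
  intro a₀ ha₀
  set xs : ℕ → Fin d → ℝ := fun i => cconv d abar (zbar i ω) with hxs
  set zs : ℕ → Fin d → ℝ := fun i => z i ω with hzs
  have h1' : ∀ k, dft d (zs 0) k ≠ 0 := by
    intro k
    have h := h1 k
    have he : (fun u => coords d zbar z (true,0,u) ω) = zs 0 := funext fun u => rfl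
    rwa [he] at h
  have hz : ∀ k, 0 < empPS d n zs k := by
    intro k
    unfold empPS
    refine mul_pos (by rw [inv_pos]; exact_mod_cast (by omega : 0 < n)) ?_
    exact Finset.sum_pos' (fun i _ => Complex.normSq_nonneg _)
      ⟨0, Finset.mem_range.2 (by omega), Complex.normSq_pos.2 (h1' k)⟩
  have hA : ∀ k, Complex.normSq (dft d a₀ k) = empPS d n xs k / empPS d n zs k := ha₀
  -- identify Fourier data with the P/Q statistics
  have ePz : ∀ i, dft d (zs i) k₀ = ((S8.Pv d zbar z true i ω : ℝ) : ℂ) := by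
    intro i
    rw [hk₀, S8.dft_k0 h0d (zs i)]
    exact congrArg _ (Finset.sum_congr rfl fun u _ => rfl)
  have eQz : ∀ i, dft d (zs i) k₁ = ((S8.Qv d zbar z true i ω : ℝ) : ℂ) := by
    intro i
    rw [hk₁, S8.dft_k1 hdeven hhalf (zs i)]
    exact congrArg _ (Finset.sum_congr rfl fun u _ => rfl)
  have ePb : ∀ i, dft d (zbar i ω) k₀ = ((S8.Pv d zbar z false i ω : ℝ) : ℂ) := by
    intro i
    rw [hk₀, S8.dft_k0 h0d (zbar i ω)]
    exact congrArg _ (Finset.sum_congr rfl fun u _ => rfl)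
  have eQb : ∀ i, dft d (zbar i ω) k₁ = ((S8.Qv d zbar z false i ω : ℝ) : ℂ) := by
    intro i
    rw [hk₁, S8.dft_k1 hdeven hhalf (zbar i ω)]
    exact congrArg _ (Finset.sum_congr rfl fun u _ => rfl)
  have exs : ∀ i k, dft d (xs i) k = dft d abar k * dft d (zbar i ω) k :=
    fun i k => S8.dft_cconv hd abar (zbar i ω) k
  set Az : ℝ := ∑ i ∈ Finset.range n, S8.Pv d zbar z true i ω^2 with hAz
  set Bz : ℝ := ∑ i ∈ Finset.range n, S8.Qv d zbar z true i ω^2 with hBz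
  set Cz : ℝ := ∑ i ∈ Finset.range n,
    S8.Pv d zbar z true i ω * S8.Qv d zbar z true i ω with hCz
  set Ab : ℝ := ∑ i ∈ Finset.range n, S8.Pv d zbar z false i ω^2 with hAb
  set Bb : ℝ := ∑ i ∈ Finset.range n, S8.Qv d zbar z false i ω^2 with hBb
  set Cb : ℝ := ∑ i ∈ Finset.range n,
    S8.Pv d zbar z false i ω * S8.Qv d zbar z false i ω with hCb2
  have eTSz : S8.TS d n zs k₀ k₁ = ((Cz : ℝ) : ℂ) := by
    unfold S8.TS
    rw [Finset.sum_congr rfl (fun i _ => by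
      rw [ePz i, eQz i, Complex.conj_ofReal, ← Complex.ofReal_mul])]
    rw [hCz]
    norm_cast
  have eTSx : S8.TS d n xs k₀ k₁
      = dft d abar k₀ * (starRingEnd ℂ) (dft d abar k₁) * ((Cb : ℝ) : ℂ) := by
    unfold S8.TS
    have hterm : ∀ i ∈ Finset.range n,
        dft d (xs i) k₀ * (starRingEnd ℂ) (dft d (xs i) k₁)
          = dft d abar k₀ * (starRingEnd ℂ) (dft d abar k₁)
            * ((S8.Pv d zbar z false i ω * S8.Qv d zbar z false i ω : ℝ) : ℂ) := by
      intro i _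
      rw [exs i k₀, exs i k₁, ePb i, eQb i, _root_.map_mul, Complex.conj_ofReal]
      push_cast
      ring
    rw [Finset.sum_congr rfl hterm, ← Finset.mul_sum, hCb2]
    norm_cast
  have esdz0 : S8.sdiag d n zs k₀ = Az := by
    unfold S8.sdiag
    rw [hAz]
    exact Finset.sum_congr rfl fun i _ => by rw [ePz i, Complex.normSq_ofReal, sq]
  have esdz1 : S8.sdiag d n zs k₁ = Bz := by
    unfold S8.sdiag
    rw [hBz]
    exact Finset.sum_congr rfl fun i _ => by rw [eQz i, Complex.normSq_ofReal, sq]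
  have esdx0 : S8.sdiag d n xs k₀ = Complex.normSq (dft d abar k₀) * Ab := by
    unfold S8.sdiag
    rw [hAb, Finset.mul_sum]
    exact Finset.sum_congr rfl fun i _ => by
      rw [exs i k₀, ePb i, Complex.normSq_mul, Complex.normSq_ofReal, sq]
  have esdx1 : S8.sdiag d n xs k₁ = Complex.normSq (dft d abar k₁) * Bb := by
    unfold S8.sdiag
    rw [hBb, Finset.mul_sum]
    exact Finset.sum_congr rfl fun i _ => by
      rw [exs i k₁, eQb i, Complex.normSq_mul, Complex.normSq_ofReal, sq]
  have e1 : Complex.normSq (S8.TS d n xs k₀ k₁)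
      = Complex.normSq (dft d abar k₀) * Complex.normSq (dft d abar k₁) * Cb^2 := by
    rw [eTSx, Complex.normSq_mul, Complex.normSq_mul, Complex.normSq_conj,
      Complex.normSq_ofReal, sq]
  have e2 : Complex.normSq (S8.TS d n zs k₀ k₁) = Cz^2 := by
    rw [eTSz, Complex.normSq_ofReal, sq]
  have hKne : Complex.normSq (dft d abar k₀) * Complex.normSq (dft d abar k₁) ≠ 0 :=
    mul_ne_zero (ne_of_gt (Complex.normSq_pos.2 (habar k₀)))
      (ne_of_gt (Complex.normSq_pos.2 (habar k₁)))
  have hNE : Complex.normSq (S8.TS d n xs k₀ k₁)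
        * (S8.sdiag d n zs k₀ * S8.sdiag d n zs k₁)
      ≠ (S8.sdiag d n xs k₀ * S8.sdiag d n xs k₁)
        * Complex.normSq (S8.TS d n zs k₀ k₁) := by
    rw [e1, e2, esdz0, esdz1, esdx0, esdx1]
    intro h
    apply h2
    refine mul_left_cancel₀ hKne ?_
    linear_combination h
  exact S8.det_main hd hn xs zs k₀ k₁ hz hNE a₀ hA
end
end
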